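/- arXiv:1602.02565 — 12 statements merged into one kernel-verified Lean document; each statement's English description precedes it below -/
import Mathlib

section
/- Let f ∈ Z^2(N,A) be a 2-cocycle for the N-module A, and let \hat{N} = A ×_f N be the corresponding extension (with multiplication (a,n)(a',n') = (a + n.a' + f(n,n'), nn')). A pair (φ_A, φ_N) ∈ Aut(A) × Aut(N) lies in the image of Φ : Aut(\hat{N}, A) → Aut(A) × Aut(N) if and only if the cocycle (φ_A, φ_N).f, defined by ((φ_A,φ_N).f)(n,n') := φ_A(f(φ_N^{-1}(n), φ_N^{-1}(n'))), differs from f by a coboundary d_N h for some cochain h : N → A (where one also twists the module structure accordingly and requires it to be preserved). -/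
/-- Multiplication of the extension `A ×_f N`: `(a,n)(a',n') = (a · S(n)(a') · f(n,n'), nn')`. -/
def extMul {A N : Type*} [CommGroup A] [Group N] (S : N →* MulAut A)
    (f : N → N → A) (x y : A × N) : A × N :=
  (x.1 * S x.2 y.1 * f x.2 y.2, x.2 * y.2)

/-- `(φ_A, φ_N)` lies in the image of `Φ : Aut(Â,A) → Aut(A) × Aut(N)` iff the
cocycle `(φ_A,φ_N).f` differs from `f` by a coboundary `d_N h` (with the twisted module
structure preserved). -/
theorem stmt_1 {A N : Type*} [CommGroup A] [Group N] (S : N →* MulAut A)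
    (f : N → N → A)
    (hnorm : ∀ n, f 1 n = 1 ∧ f n 1 = 1)
    (hcoc : ∀ n n' n'', S n (f n' n'') * f n (n' * n'') = f (n * n') n'' * f n n')
    (φA : MulAut A) (φN : MulAut N) :
    (∃ φ : A × N → A × N, Function.Bijective φ ∧
        (∀ x y, φ (extMul S f x y) = extMul S f (φ x) (φ y)) ∧
        (∀ a : A, ∃ b : A, φ (a, (1 : N)) = (b, 1)) ∧
        (∀ a : A, (φ (a, (1 : N))).1 = φA a) ∧
        (∀ x : A × N, (φ x).2 = φN x.2)) ↔
      (∃ h : N → A, h 1 = 1 ∧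
        (∀ n a, φA (S (φN⁻¹ n) (φA⁻¹ a)) = S n a) ∧
        (∀ n n', φA (f (φN⁻¹ n) (φN⁻¹ n')) =
          f n n' * (S n (h n') * (h (n * n'))⁻¹ * h n))) := by
  constructor
  · rintro ⟨φ, hbij, hmul, -, hA2, hN⟩
    have hS1 : ∀ a : A, S 1 a = a := by
      intro a; rw [map_one S]; rfl
    have hφ1 : ∀ a : A, φ (a, 1) = (φA a, 1) := by
      intro a
      refine Prod.ext (hA2 a) ?_
      rw [hN]; exact map_one φN
    have hφ : ∀ (a : A) (n : N), φ (a, n) = (φA a * (φ (1, n)).1, φN n) := by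
      intro a n
      have key : extMul S f (a, (1 : N)) ((1 : A), n) = (a, n) := by
        simp only [extMul, hS1, (hnorm n).1, mul_one, one_mul]
      have h2 : (φ ((1 : A), n)).2 = φN n := hN _
      calc φ (a, n) = φ (extMul S f (a, 1) (1, n)) := by rw [key]
        _ = extMul S f (φ (a, 1)) (φ (1, n)) := hmul _ _
        _ = (φA a * (φ (1, n)).1, φN n) := by
            rw [hφ1 a]
            show (φA a * S 1 ((φ (1, n)).1) * f 1 ((φ (1, n)).2),
                1 * (φ (1, n)).2) = _
            rw [h2, hS1, (hnorm (φN n)).1, mul_one, one_mul]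
    have h'1 : (φ ((1 : A), (1 : N))).1 = 1 := by rw [hA2 1, map_one]
    have master : ∀ (a a' : A) (n n' : N),
        φA (a * S n a' * f n n') * (φ ((1 : A), n * n')).1 =
        φA a * (φ ((1 : A), n)).1 * (S (φN n) (φA a' * (φ ((1 : A), n')).1)) *
          f (φN n) (φN n') := by
      intro a a' n n'
      have hm := hmul (a, n) (a', n')
      simp only [extMul] at hm
      rw [hφ (a * S n a' * f n n') (n * n'), hφ a n, hφ a' n'] at hm
      have hfst := congrArg Prod.fst hm
      simpa [map_mul] using hfst
    have hmod : ∀ (n : N) (a' : A), φA (S n a') = S (φN n) (φA a') := by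
      intro n a'
      have := master 1 a' n 1
      simp only [map_one, one_mul, mul_one, (hnorm n).2, h'1,
        (hnorm (φN n)).2] at this
      rw [mul_comm (φA (S n a'))] at this
      exact mul_left_cancel this
    have hcocy : ∀ n n' : N,
        φA (f n n') * (φ ((1 : A), n * n')).1 =
        (φ ((1 : A), n)).1 * S (φN n) ((φ ((1 : A), n')).1) *
          f (φN n) (φN n') := by
      intro n n'
      have := master 1 1 n n'
      simpa using this
    refine ⟨fun m => (φ ((1 : A), φN⁻¹ m)).1, ?_, ?_, ?_⟩
    · show (φ ((1 : A), φN⁻¹ (1 : N))).1 = 1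
      rw [map_one]; exact h'1
    · intro n a
      have := hmod (φN⁻¹ n) (φA⁻¹ a)
      rwa [MulAut.apply_inv_self, MulAut.apply_inv_self] at this
    · intro n n'
      have e := hcocy (φN⁻¹ n) (φN⁻¹ n')
      rw [MulAut.apply_inv_self, MulAut.apply_inv_self,
        show φN⁻¹ n * φN⁻¹ n' = φN⁻¹ (n * n') from (map_mul _ _ _).symm] at e
      have e2 := eq_mul_inv_of_mul_eq e
      rw [e2]
      simp only [mul_comm, mul_assoc, mul_left_comm]
  · rintro ⟨h, h1, hmodinv, hcobinv⟩
    have hmod : ∀ (n : N) (a : A), φA (S n a) = S (φN n) (φA a) := by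
      intro n a
      have := hmodinv (φN n) (φA a)
      simpa [MulAut.inv_apply_self] using this
    have hcob : ∀ n n' : N, φA (f n n') =
        f (φN n) (φN n') *
          (S (φN n) (h (φN n')) * (h (φN n * φN n'))⁻¹ * h (φN n)) := by
      intro n n'
      have := hcobinv (φN n) (φN n')
      simpa [MulAut.inv_apply_self] using this
    refine ⟨fun x => (φA x.1 * h (φN x.2), φN x.2), ?_, ?_, ?_, ?_, ?_⟩
    · refine Function.bijective_iff_has_inverse.mpr
        ⟨fun y => (φA⁻¹ (y.1 * (h y.2)⁻¹), φN⁻¹ y.2), ?_, ?_⟩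
      · intro x
        simp [MulAut.inv_apply_self]
      · intro y
        simp [MulAut.apply_inv_self]
    · rintro ⟨a, n⟩ ⟨a', n'⟩
      simp only [extMul]
      refine Prod.ext ?_ (map_mul φN n n')
      show φA (a * S n a' * f n n') * h (φN (n * n')) =
        (φA a * h (φN n)) * S (φN n) (φA a' * h (φN n')) * f (φN n) (φN n')
      rw [map_mul φA, map_mul φA, hmod, hcob, map_mul φN, map_mul (S (φN n))]
      simp only [mul_comm, mul_assoc, mul_left_comm, inv_mul_cancel_left,
        mul_inv_cancel_left, mul_inv_cancel, inv_mul_cancel, one_mul, mul_one]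
    · intro a
      exact ⟨φA a * h (φN 1), Prod.ext rfl (map_one φN)⟩
    · intro a
      show φA a * h (φN 1) = φA a
      rw [map_one φN, h1, mul_one]
    · intro x
      rfl
end

section
/- Let f ∈ Z^2(N,A) and \hat{N} = A ×_f N. An automorphism φ ∈ Aut(\hat{N}, A) satisfies Φ(φ) = (φ_A, φ_N) if and only if it has the form φ(a,n) = (φ_A(a) + h(φ_N(n)), φ_N(n)) for some normalized cochain h : N → A with (φ_A, φ_N).(S,f) = (S, f + d_N h). -/
/-- an automorphism `φ` of `Â = A ×_f N` preserving `A` satisfies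
`Φ(φ) = (φ_A, φ_N)` iff `φ(a,n) = (φ_A(a) · h(φ_N(n)), φ_N(n))` for a normalized cochain `h`
with `(φ_A,φ_N).(S,f) = (S, f · d_N h)`. -/
theorem stmt_2 {A N : Type*} [CommGroup A] [Group N] (S : N →* MulAut A)
    (f : N → N → A)
    (hnorm : ∀ n, f 1 n = 1 ∧ f n 1 = 1)
    (hcoc : ∀ n n' n'', S n (f n' n'') * f n (n' * n'') = f (n * n') n'' * f n n')
    (φA : MulAut A) (φN : MulAut N)
    (φ : A × N → A × N)
    (hbij : Function.Bijective φ)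
    (hmul : ∀ x y, φ (extMul S f x y) = extMul S f (φ x) (φ y))
    (hA : ∀ a : A, ∃ b : A, φ (a, (1 : N)) = (b, 1)) :
    ((∀ a : A, φ (a, (1 : N)) = (φA a, 1)) ∧ (∀ x : A × N, (φ x).2 = φN x.2)) ↔
      (∃ h : N → A, h 1 = 1 ∧
        (∀ a n, φ (a, n) = (φA a * h (φN n), φN n)) ∧
        (∀ n a, φA (S (φN⁻¹ n) (φA⁻¹ a)) = S n a) ∧
        (∀ n n', φA (f (φN⁻¹ n) (φN⁻¹ n')) =
          f n n' * (S n (h n') * (h (n * n'))⁻¹ * h n))) := by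
  constructor
  · rintro ⟨hid, hsec⟩
    set h : N → A := fun m => (φ (1, φN⁻¹ m)).1 with hh
    have φ1n : ∀ n : N, φ (1, n) = (h (φN n), φN n) := by
      intro n
      have h2 := hsec (1, n)
      have h1 : h (φN n) = (φ (1, n)).1 := by
        simp [hh]
      exact Prod.ext h1.symm h2
    have φeq : ∀ a n, φ (a, n) = (φA a * h (φN n), φN n) := by
      intro a n
      have key : extMul S f (a, 1) ((1 : A), n) = (a, n) := by
        simp [extMul, (hnorm n).1]
      calc φ (a, n) = φ (extMul S f (a, 1) ((1 : A), n)) := by rw [key]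
        _ = extMul S f (φ (a, 1)) (φ (1, n)) := hmul _ _
        _ = extMul S f (φA a, 1) (h (φN n), φN n) := by rw [hid, φ1n]
        _ = (φA a * h (φN n), φN n) := by simp [extMul, (hnorm (φN n)).1]
    have h1 : h 1 = 1 := by
      have e := hid 1
      rw [map_one] at e
      show (φ (1, φN⁻¹ (1:N))).1 = 1
      rw [map_one, e]
    refine ⟨h, h1, φeq, ?_, ?_⟩
    · -- S identity
      have key : ∀ n a, φA (S n a) = S (φN n) (φA a) := by
        intro n a
        have e := hmul ((1 : A), n) (a, (1 : N))
        simp only [extMul, map_one, one_mul, mul_one, (hnorm n).2] at e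
        rw [φeq, φ1n, φeq] at e
        have e1 : φA (S n a) * h (φN n) = h (φN n) * S (φN n) (φA a) * f (φN n) 1 := by
          have := congrArg Prod.fst e
          simpa [extMul, h1] using this
        rw [(hnorm (φN n)).2, mul_one, mul_comm (h (φN n))] at e1
        exact mul_right_cancel e1
      intro n a
      have := key (φN⁻¹ n) (φA⁻¹ a)
      simpa using this
    · -- f identity
      have key : ∀ n n', φA (f n n') =
          f (φN n) (φN n') * (S (φN n) (h (φN n')) * (h (φN n * φN n'))⁻¹ * h (φN n)) := by
        intro n n'
        have e := hmul ((1 : A), n) ((1 : A), n')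
        simp only [extMul, map_one, one_mul, mul_one] at e
        rw [φeq, φ1n, φ1n] at e
        have e1 : φA (f n n') * h (φN (n * n')) =
            h (φN n) * S (φN n) (h (φN n')) * f (φN n) (φN n') := by
          have := congrArg Prod.fst e
          simpa [extMul] using this
        rw [map_mul φN] at e1
        have e2 : φA (f n n') =
            h (φN n) * S (φN n) (h (φN n')) * f (φN n) (φN n') * (h (φN n * φN n'))⁻¹ :=
          eq_mul_inv_of_mul_eq e1
        rw [e2]
        simp [mul_comm, mul_assoc, mul_left_comm]
      intro n n'
      have := key (φN⁻¹ n) (φN⁻¹ n')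
      simpa using this
  · rintro ⟨h, h1, hφ, -, -⟩
    constructor
    · intro a
      rw [hφ]
      simp [h1]
    · intro x
      rw [show x = (x.1, x.2) from rfl, hφ]
end

section
/- Let G be a group, N ⊴ G a normal subgroup, (A,S) a G-module, f ∈ Z^2(N,A) a 2-cocycle for the restricted N-action, and \hat{N} = A ×_f N. Suppose θ assigns to each g ∈ G a cochain θ(g) : N → A with d_N(θ(g)) = g.f − f, where (g.f)(n,n') := S(g)(f(g^{-1}ng, g^{-1}n'g)). Then for each g ∈ G the map \hat{ψ}_θ(g) : \hat{N} → \hat{N}, (a,n) ↦ (S(g)(a) + θ(g)(gng^{-1}), gng^{-1}) is an automorphism of \hat{N} preserving A, with inverse (a,n) ↦ (S(g^{-1})(a) − (g^{-1}.θ(g))(g^{-1}ng), g^{-1}ng). -/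
private lemma abel_helper {A : Type*} [CommGroup A] (p q c d e w : A) :
    p * q * (c * d⁻¹ * e * w) * d = p * e * (q * c) * w := by
  have : Additive.ofMul p + Additive.ofMul q +
      (Additive.ofMul c + -(Additive.ofMul d) + Additive.ofMul e + Additive.ofMul w) +
      Additive.ofMul d
      = Additive.ofMul p + Additive.ofMul e +
        (Additive.ofMul q + Additive.ofMul c) + Additive.ofMul w := by abel
  exact this

/-- given `θ` with `d_N(θ(g)) = g.f − f`, each map
`ψ̂_θ(g) : (a,n) ↦ (S(g)(a) · θ(g)(gng⁻¹), gng⁻¹)` is an automorphism of `N̂ = A ×_f N`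
preserving `A`, with inverse `(a,n) ↦ (S(g⁻¹)(a) · ((g⁻¹.θ(g))(g⁻¹ng))⁻¹, g⁻¹ng)`. -/
theorem stmt_3 {A Nn G : Type*} [CommGroup A] [Group Nn] [Group G]
    (S : G →* MulAut A) (ι : Nn →* G) (hι : Function.Injective ι)
    (conj : G → Nn → Nn) (hconj : ∀ g m, ι (conj g m) = g * ι m * g⁻¹)
    (f : Nn → Nn → A)
    (hnorm : ∀ n, f 1 n = 1 ∧ f n 1 = 1)
    (hcoc : ∀ n n' n'', S (ι n) (f n' n'') * f n (n' * n'') = f (n * n') n'' * f n n')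
    (θ : G → Nn → A) (hθ1 : ∀ g, θ g 1 = 1)
    (hθ : ∀ g n n', S g (f (conj g⁻¹ n) (conj g⁻¹ n')) * (f n n')⁻¹ =
      S (ι n) (θ g n') * (θ g (n * n'))⁻¹ * θ g n) :
    ∀ g : G,
      let Ψ : A × Nn → A × Nn := fun z => (S g z.1 * θ g (conj g z.2), conj g z.2)
      let Φg : A × Nn → A × Nn :=
        fun z => (S g⁻¹ z.1 * (S g⁻¹ (θ g (conj g (conj g⁻¹ z.2))))⁻¹, conj g⁻¹ z.2)
      (∀ x y, Ψ (extMul (S.comp ι) f x y) = extMul (S.comp ι) f (Ψ x) (Ψ y)) ∧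
      Function.LeftInverse Φg Ψ ∧ Function.RightInverse Φg Ψ ∧
      (∀ a : A, ∃ b : A, Ψ (a, (1 : Nn)) = (b, 1)) := by
  have hone : ∀ g : G, conj g 1 = 1 := fun g => hι (by simp [hconj])
  have hmul : ∀ (g : G) m m', conj g (m * m') = conj g m * conj g m' := fun g m m' =>
    hι (by simp only [hconj, map_mul]; group)
  have hinv : ∀ (g : G) m, conj g⁻¹ (conj g m) = m := fun g m =>
    hι (by simp only [hconj]; group)
  have hinv' : ∀ (g : G) m, conj g (conj g⁻¹ m) = m := fun g m =>
    hι (by simp only [hconj]; group)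
  intro g Ψ Φg
  have hSinv : ∀ b : A, S g⁻¹ (S g b) = b := by
    intro b
    have h : S g⁻¹ * S g = 1 := by rw [← map_mul, inv_mul_cancel, map_one]
    calc S g⁻¹ (S g b) = (S g⁻¹ * S g) b := rfl
      _ = b := by rw [h]; rfl
  have hSinv' : ∀ b : A, S g (S g⁻¹ b) = b := by
    intro b
    have h : S g * S g⁻¹ = 1 := by rw [← map_mul, mul_inv_cancel, map_one]
    calc S g (S g⁻¹ b) = (S g * S g⁻¹) b := rfl
      _ = b := by rw [h]; rfl
  refine ⟨?_, ?_, ?_, ?_⟩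
  · intro x y
    have hS2 : ∀ b : A, S (ι (conj g x.2)) (S g b) = S g (S (ι x.2) b) := by
      intro b
      have h : S (ι (conj g x.2)) * S g = S g * S (ι x.2) := by
        rw [← map_mul, ← map_mul, hconj]
        congr 1
        group
      calc S (ι (conj g x.2)) (S g b) = (S (ι (conj g x.2)) * S g) b := rfl
        _ = (S g * S (ι x.2)) b := by rw [h]
        _ = S g (S (ι x.2) b) := rfl
    have key := hθ g (conj g x.2) (conj g y.2)
    rw [hinv, hinv] at key
    have key2 : S g (f x.2 y.2) =
        S (ι (conj g x.2)) (θ g (conj g y.2)) * (θ g (conj g x.2 * conj g y.2))⁻¹ *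
          θ g (conj g x.2) * f (conj g x.2) (conj g y.2) := by
      rw [← key]; group
    simp only [Ψ, extMul, MonoidHom.comp_apply]
    refine Prod.ext ?_ (hmul g x.2 y.2)
    show S g (x.1 * S (ι x.2) y.1 * f x.2 y.2) * θ g (conj g (x.2 * y.2)) =
      S g x.1 * θ g (conj g x.2) * S (ι (conj g x.2)) (S g y.1 * θ g (conj g y.2)) *
        f (conj g x.2) (conj g y.2)
    rw [hmul g x.2 y.2, map_mul, map_mul, map_mul, hS2, key2]
    exact abel_helper _ _ _ _ _ _
  · intro z
    obtain ⟨a, m⟩ := z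
    simp only [Ψ, Φg, hinv]
    refine Prod.ext ?_ rfl
    show S g⁻¹ (S g a * θ g (conj g m)) * (S g⁻¹ (θ g (conj g m)))⁻¹ = a
    rw [map_mul, hSinv]
    group
  · intro z
    obtain ⟨a, m⟩ := z
    simp only [Ψ, Φg, hinv']
    refine Prod.ext ?_ rfl
    show S g (S g⁻¹ a * (S g⁻¹ (θ g m))⁻¹) * θ g m = a
    rw [map_mul, map_inv (S g), hSinv', hSinv']
    group
  · intro a
    exact ⟨S g a, by simp [Ψ, hone, hθ1]⟩
end

section
/- Let G be a group, N ⊴ G normal, (A,S) a G-module, f ∈ Z^2(N,A) and \hat{N} = A ×_f N. The conjugation homomorphism ψ : G → Aut(A) × Aut(N), g ↦ (S(g), c_g|_N) lifts to a group homomorphism \hat{ψ} : G → Aut(\hat{N}, A) with Φ ∘ \hat{ψ} = ψ if and only if there exists θ : G → C^1(N,A) with d_N(θ(g)) = g.f − f for all g ∈ G and the class [d_{S_ψ}θ] ∈ H^2(G, Z^1(N,A)) vanishes. -/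
private lemma mulEq {A : Type*} [CommGroup A] {x y : A}
    (h : Additive.ofMul x = Additive.ofMul y) : x = y :=
  Additive.ofMul.injective h

private lemma eq_of_div' {A : Type*} [CommGroup A] {a b c d : A} (h : c = d)
    (h2 : a / b = c / d) : a = b := by
  rw [h, div_self'] at h2; exact div_eq_one.mp h2

private lemma eq_of_div2 {A : Type*} [CommGroup A] {a b c d e k : A} (h : c = d) (h' : e = k)
    (h2 : a / b = (c / d) * (e / k)) : a = b := by
  rw [h, h', div_self', div_self', one_mul] at h2; exact div_eq_one.mp h2

/-- the conjugation homomorphism `ψ : G → Aut(A) × Aut(N)` lifts to a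
homomorphism `ψ̂ : G → Aut(N̂,A)` with `Φ ∘ ψ̂ = ψ` iff there is `θ : G → C¹(N,A)` with
`d_N(θ(g)) = g.f − f` for all `g` and the class `[d_{S_ψ}θ] ∈ H²(G, Z¹(N,A))` vanishes. -/
theorem stmt_5 {A Nn G : Type*} [CommGroup A] [Group Nn] [Group G]
    (S : G →* MulAut A) (ι : Nn →* G) (hι : Function.Injective ι)
    (conj : G → Nn → Nn) (hconj : ∀ g m, ι (conj g m) = g * ι m * g⁻¹)
    (f : Nn → Nn → A)
    (hnorm : ∀ n, f 1 n = 1 ∧ f n 1 = 1)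
    (hcoc : ∀ n n' n'', S (ι n) (f n' n'') * f n (n' * n'') = f (n * n') n'' * f n n') :
    -- a lift ψ̂ of ψ to a homomorphism G → Aut(N̂, A) exists ...
    (∃ Ψ : G → A × Nn → A × Nn,
      (∀ g, Function.Bijective (Ψ g)) ∧
      (∀ g x y, Ψ g (extMul (S.comp ι) f x y) = extMul (S.comp ι) f (Ψ g x) (Ψ g y)) ∧
      (∀ g (a : A), Ψ g (a, (1 : Nn)) = (S g a, 1)) ∧
      (∀ g (x : A × Nn), (Ψ g x).2 = conj g x.2) ∧
      (∀ g g' x, Ψ (g * g') x = Ψ g (Ψ g' x))) ↔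
    -- ... iff f is smoothly cohomologically invariant and [d_{S_ψ}θ] vanishes
    (∃ θ : G → Nn → A, (∀ g, θ g 1 = 1) ∧
      (∀ g n n', S g (f (conj g⁻¹ n) (conj g⁻¹ n')) * (f n n')⁻¹ =
        S (ι n) (θ g n') * (θ g (n * n'))⁻¹ * θ g n) ∧
      ∃ η : G → Nn → A,
        (∀ g n n', η g (n * n') = η g n * S (ι n) (η g n')) ∧
        (∀ g g' n, S g (θ g' (conj g⁻¹ n)) * (θ (g * g') n)⁻¹ * θ g n =
          S g (η g' (conj g⁻¹ n)) * (η (g * g') n)⁻¹ * η g n)) := by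
  have hn1 : ∀ n, f 1 n = 1 := fun n => (hnorm n).1
  have conjmul : ∀ (g : G) (m m' : Nn), conj g (m * m') = conj g m * conj g m' := by
    intro g m m'; apply hι; simp only [hconj, map_mul]; group
  have conjcomp : ∀ (g g' : G) (m : Nn), conj g (conj g' m) = conj (g * g') m := by
    intro g g' m; apply hι; simp only [hconj]; group
  have conjone : ∀ g : G, conj g 1 = 1 := by
    intro g; apply hι; simp only [hconj, map_one]; group
  have conjid : ∀ m : Nn, conj 1 m = m := by
    intro m; apply hι; simp only [hconj]; group
  have conjinv : ∀ (g : G) (n : Nn), conj g (conj g⁻¹ n) = n := by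
    intro g n; rw [conjcomp, mul_inv_cancel, conjid]
  have conjinv' : ∀ (g : G) (n : Nn), conj g⁻¹ (conj g n) = n := by
    intro g n; rw [conjcomp, inv_mul_cancel, conjid]
  have Sc : ∀ (g : G) (n : Nn) (a : A), S (ι (conj g n)) (S g a) = S g (S (ι n) a) := by
    intro g n a; rw [hconj, map_mul, map_mul, map_inv]; simp
  constructor
  · rintro ⟨Ψ, hbij, hmul, hA, hproj, hhom⟩
    obtain ⟨τ, hτ⟩ : ∃ τ : G → Nn → A, ∀ g n, Ψ g (1, n) = (τ g n, conj g n) := by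
      refine ⟨fun g n => (Ψ g (1, n)).1, fun g n => ?_⟩
      rw [← hproj g (1, n)]
    have hform : ∀ (g : G) (a : A) (n : Nn), Ψ g (a, n) = (S g a * τ g n, conj g n) := by
      intro g a n
      have h1 : extMul (S.comp ι) f (a, 1) ((1 : A), n) = (a, n) := by
        simp [extMul, hn1]
      have h2 := hmul g (a, 1) (1, n)
      rw [h1, hA, hτ] at h2
      rw [h2]
      simp [extMul, hn1]
    refine ⟨fun g n => τ g (conj g⁻¹ n), ?_, ?_, fun _ _ => 1, ?_, ?_⟩
    · intro g
      dsimp only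
      rw [conjone]
      have h := congrArg Prod.fst ((hτ g 1).symm.trans (hA g 1))
      simpa using h
    · intro g n n'
      dsimp only
      have key := congrArg Prod.fst (hmul g ((1:A), conj g⁻¹ n) ((1:A), conj g⁻¹ n'))
      rw [show extMul (S.comp ι) f ((1:A), conj g⁻¹ n) ((1:A), conj g⁻¹ n')
          = (f (conj g⁻¹ n) (conj g⁻¹ n'), conj g⁻¹ (n * n')) from by
            simp [extMul, ← conjmul],
        hform, hτ, hτ] at key
      simp only [extMul, conjinv, MonoidHom.comp_apply] at key
      refine eq_of_div' key ?_
      apply mulEq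
      simp only [div_eq_mul_inv, mul_inv_rev, inv_inv, ofMul_mul, ofMul_inv]
      abel
    · intro g n n'
      simp
    · intro g g' n
      dsimp only
      have key := congrArg Prod.fst (hhom g g' ((1:A), conj (g * g')⁻¹ n))
      rw [hτ, hτ, hform] at key
      simp only [conjcomp, mul_inv_rev, mul_inv_cancel_left] at key ⊢
      -- key : τ (g*g') (conj (g'⁻¹ * g⁻¹) n) = S g (τ g' (conj (g'⁻¹*g⁻¹) n)) * τ g (conj g⁻¹ n)
      rw [key]
      simp only [map_one, inv_one, mul_one]
      apply mulEq
      simp only [mul_inv_rev, ofMul_mul, ofMul_inv, ofMul_one]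
      abel
  · rintro ⟨θ, hθ1, hθ2, η, hη, hcomp⟩
    have hη1 : ∀ g : G, η g 1 = 1 := by
      intro g
      have h := hη g 1 1
      simp only [one_mul, map_one, MulAut.one_apply] at h
      exact left_eq_mul.mp h
    set θ' : G → Nn → A := fun g n => θ g n * (η g n)⁻¹ with hθ'
    have hθ'1 : ∀ g : G, θ' g 1 = 1 := by
      intro g; simp [hθ', hθ1, hη1]
    have key2 : ∀ (g g' : G) (n : Nn), θ' (g * g') n = S g (θ' g' (conj g⁻¹ n)) * θ' g n := by
      intro g g' n
      refine eq_of_div' (hcomp g g' n).symm ?_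
      simp only [hθ', map_mul, map_inv, div_eq_mul_inv, mul_inv_rev, inv_inv]
      apply mulEq
      simp only [ofMul_mul, ofMul_inv]
      abel
    have hθ'one : ∀ n : Nn, θ' 1 n = 1 := by
      intro n
      have h := key2 1 1 n
      simp only [mul_one, inv_one, conjid, map_one, MulAut.one_apply] at h
      exact left_eq_mul.mp h
    have hd2 : ∀ (g : G) (n n' : Nn), S g (f (conj g⁻¹ n) (conj g⁻¹ n')) * (f n n')⁻¹ =
        S (ι n) (θ' g n') * (θ' g (n * n'))⁻¹ * θ' g n := by
      intro g n n'
      refine eq_of_div2 (hθ2 g n n') (hη g n n').symm ?_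
      simp only [hθ', map_mul, map_inv, div_eq_mul_inv, mul_inv_rev, inv_inv]
      apply mulEq
      simp only [ofMul_mul, ofMul_inv]
      abel
    set Ψ : G → A × Nn → A × Nn :=
      fun g x => (S g x.1 * θ' g (conj g x.2), conj g x.2) with hΨ
    have hom5 : ∀ (g g' : G) (x : A × Nn), Ψ (g * g') x = Ψ g (Ψ g' x) := by
      intro g g' x
      obtain ⟨a, n⟩ := x
      simp only [hΨ]
      have e : conj g⁻¹ (conj (g * g') n) = conj g' n := by
        rw [conjcomp, inv_mul_cancel_left]
      refine Prod.ext ?_ (conjcomp g g' n).symm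
      rw [key2 g g' (conj (g * g') n), e, conjcomp]
      simp only [map_mul, MulAut.mul_apply]
      apply mulEq
      simp only [ofMul_mul]
      abel
    have lid : ∀ x : A × Nn, Ψ 1 x = x := by
      rintro ⟨a, n⟩
      simp [hΨ, conjid, hθ'one]
    refine ⟨Ψ, ?_, ?_, ?_, ?_, hom5⟩
    · intro g
      refine Function.bijective_iff_has_inverse.mpr ⟨Ψ g⁻¹, ?_, ?_⟩
      · intro x
        rw [← hom5, inv_mul_cancel, lid]
      · intro x
        rw [← hom5, mul_inv_cancel, lid]
    · intro g x y
      obtain ⟨a, n⟩ := x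
      obtain ⟨b, m⟩ := y
      have h := hd2 g (conj g n) (conj g m)
      rw [conjinv', conjinv', ← conjmul] at h
      simp only [hΨ, extMul, MonoidHom.comp_apply]
      refine Prod.ext ?_ (conjmul g n m)
      simp only [map_mul, Sc]
      refine eq_of_div' h ?_
      apply mulEq
      simp only [div_eq_mul_inv, mul_inv_rev, inv_inv, ofMul_mul, ofMul_inv]
      abel
    · intro g a
      simp [hΨ, conjone, hθ'1]
    · intro g x
      simp [hΨ]
end

section
/- Let G be a group, N ⊴ G, (A,S) a G-module, f ∈ Z^2(N,A), \hat{N} = A ×_f N, and let Γ ⊆ Aut(\hat{N},A) × G be the pullback {(φ,g) : Φ(φ) = ψ(g)} of the extension Aut(\hat{N},A) → Aut(A)×Aut(N) along the conjugation homomorphism ψ(g) = (S(g), c_g|_N). Define α : \hat{N} → Γ by α(a,n) := (c_{(a,n)}, n) (conjugation by (a,n) in \hat{N}, paired with n ∈ N ⊆ G). Then ker(α) = A^N, the subgroup of N-invariants of A ⊆ \hat{N}. -/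
/-- for `α : N̂ → Γ`, `α(a,n) = (c_{(a,n)}, n)`, the kernel of `α` is `A^N`,
the subgroup of `N`-invariants of `A ⊆ N̂`.  Membership of `(a,n)` in the kernel means that
conjugation by `(a,n)` in `N̂ = A ×_f N` is trivial (equivalently `(a,n)` is central) and
that `n = 1` in `N ⊆ G`. -/
theorem stmt_8 {A Nn G : Type*} [CommGroup A] [Group Nn] [Group G]
    (S : G →* MulAut A) (ι : Nn →* G) (hι : Function.Injective ι)
    (f : Nn → Nn → A)
    (hnorm : ∀ n, f 1 n = 1 ∧ f n 1 = 1)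
    (hcoc : ∀ n n' n'', S (ι n) (f n' n'') * f n (n' * n'') = f (n * n') n'' * f n n') :
    ∀ (a : A) (n : Nn),
      ((∀ y : A × Nn, extMul (S.comp ι) f (a, n) y = extMul (S.comp ι) f y (a, n)) ∧
          ι n = 1) ↔
        (n = 1 ∧ ∀ m : Nn, S (ι m) a = a) := by
  intro a n
  constructor
  · rintro ⟨hc, hn⟩
    have hn1 : n = 1 := hι (by simpa using hn)
    subst hn1
    refine ⟨rfl, fun m => ?_⟩
    have h := hc (1, m)
    simp [extMul, (hnorm m).1, (hnorm m).2] at h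
    exact h.symm
  · rintro ⟨hn1, hinv⟩
    subst hn1
    refine ⟨fun y => ?_, by simp⟩
    obtain ⟨b, m⟩ := y
    simp [extMul, (hnorm m).1, (hnorm m).2, hinv m, mul_comm]
end

section
/- Let G be a group, N ⊴ G, (A,S) a G-module, f ∈ Z^2(N,A), \hat{N} = A ×_f N, and Γ the pullback of Aut(\hat{N},A) along ψ : G → Aut(A)×Aut(N). The pair consisting of α : \hat{N} → Γ, α(x) = (c_x, q(x)) and the action \hat{S} : Γ → Aut(\hat{N}), \hat{S}(φ,g) := φ, satisfies the crossed-module axioms: α(\hat{S}(γ)(x)) = γ α(x) γ^{-1} for all γ ∈ Γ, x ∈ \hat{N}, and \hat{S}(α(x)) is conjugation by x. -/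
/-- the pair `α : N̂ → Γ`, `α(x) = (c_x, q(x))`, together with the action
`Ŝ(φ,g) := φ` of `Γ` on `N̂`, satisfies the crossed-module axioms:
`α(Ŝ(γ)(x)) = γ α(x) γ⁻¹` for `γ = (φ,g) ∈ Γ`, and `Ŝ(α(x))` is conjugation by `x`. -/
theorem stmt_9 {A Nn G : Type*} [CommGroup A] [Group Nn] [Group G]
    (S : G →* MulAut A) (ι : Nn →* G) (hι : Function.Injective ι)
    (f : Nn → Nn → A)
    (hnorm : ∀ n, f 1 n = 1 ∧ f n 1 = 1)
    (hcoc : ∀ n n' n'', S (ι n) (f n' n'') * f n (n' * n'') = f (n * n') n'' * f n n')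
    -- inversion in the extension N̂ = A ×_f N
    (inv : A × Nn → A × Nn)
    (hinv : ∀ x, extMul (S.comp ι) f x (inv x) = (1, 1) ∧
      extMul (S.comp ι) f (inv x) x = (1, 1))
    -- (φ, g) is an element of the pullback Γ ⊆ Aut(N̂,A) × G, i.e. Φ(φ) = ψ(g)
    (φ : A × Nn → A × Nn) (g : G)
    (hφbij : Function.Bijective φ)
    (hφmul : ∀ x y, φ (extMul (S.comp ι) f x y) = extMul (S.comp ι) f (φ x) (φ y))
    (hφA : ∀ a : A, φ (a, (1 : Nn)) = (S g a, 1))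
    (hφproj : ∀ x : A × Nn, ι ((φ x).2) = g * ι x.2 * g⁻¹) :
    let m := extMul (S.comp ι) f
    let cconj : A × Nn → A × Nn → A × Nn := fun x y => m (m x y) (inv x)
    let alpha : A × Nn → ((A × Nn → A × Nn) × G) := fun x => (cconj x, ι x.2)
    let Shat : ((A × Nn → A × Nn) × G) → (A × Nn → A × Nn) := Prod.fst
    -- CM1, first component: c_{φ(x)} = φ ∘ c_x ∘ φ⁻¹
    (∀ x y : A × Nn,
      (alpha (Shat (φ, g) x)).1 y = φ ((alpha x).1 (Function.invFun φ y))) ∧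
    -- CM1, second component: q(φ(x)) = g q(x) g⁻¹ in G
    (∀ x : A × Nn, (alpha (Shat (φ, g) x)).2 = g * (alpha x).2 * g⁻¹) ∧
    -- CM2: Ŝ(α(x)) is conjugation by x
    (∀ x y : A × Nn, Shat (alpha x) y = m (m x y) (inv x)) := by
  intro m cconj alpha Shat
  have hone : φ ((1 : A), (1 : Nn)) = ((1 : A), (1 : Nn)) := by simpa using hφA 1
  have hmul_one : ∀ z : A × Nn, extMul (S.comp ι) f z (1, 1) = z := by
    intro z
    simp [extMul, (hnorm z.2).2]
  have hone_mul : ∀ z : A × Nn, extMul (S.comp ι) f (1, 1) z = z := by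
    intro z
    simp [extMul, (hnorm z.2).1]
  have hassoc : ∀ x y z : A × Nn,
      extMul (S.comp ι) f (extMul (S.comp ι) f x y) z
        = extMul (S.comp ι) f x (extMul (S.comp ι) f y z) := by
    intro x y z
    have h := hcoc x.2 y.2 z.2
    rw [Prod.ext_iff]
    refine ⟨?_, (mul_assoc _ _ _)⟩
    simp only [extMul, MonoidHom.comp_apply, map_mul, MulAut.mul_apply]
    have := congrArg (fun t => x.1 * (S (ι x.2)) y.1 * ((S (ι x.2)) ((S (ι y.2)) z.1)) * t) h
    simpa [mul_assoc, mul_comm, mul_left_comm] using this.symm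
  have hinv_unique : ∀ x b : A × Nn, extMul (S.comp ι) f x b = (1, 1) → b = inv x := by
    intro x b hb
    calc b = extMul (S.comp ι) f (1, 1) b := (hone_mul b).symm
      _ = extMul (S.comp ι) f (extMul (S.comp ι) f (inv x) x) b := by rw [(hinv x).2]
      _ = extMul (S.comp ι) f (inv x) (extMul (S.comp ι) f x b) := hassoc _ _ _
      _ = extMul (S.comp ι) f (inv x) (1, 1) := by rw [hb]
      _ = inv x := hmul_one _
  have hφinv : ∀ x : A × Nn, φ (inv x) = inv (φ x) := by
    intro x
    apply hinv_unique
    rw [← hφmul, (hinv x).1, hone]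
  refine ⟨?_, ?_, ?_⟩
  · intro x y
    show extMul (S.comp ι) f (extMul (S.comp ι) f (φ x) y) (inv (φ x))
      = φ (extMul (S.comp ι) f (extMul (S.comp ι) f x (Function.invFun φ y)) (inv x))
    rw [hφmul, hφmul, hφinv, Function.rightInverse_invFun hφbij.2 y]
  · intro x
    exact hφproj x
  · intro x y
    rfl
end

section
/- For any totally antisymmetric collection of integers S_{pqr}, 1 ≤ p,q,r ≤ n, the map c_S : ℝ^n × ℤ^n × ℤ^n → ℝ/ℤ defined by c_S(x; u, v) := Σ_{p,q,r} S_{pqr} x_p u_q v_r (mod ℤ) is a 2-cocycle on the group ℤ^n with values in the ℤ^n-module A = Map(ℝ^n, ℝ/ℤ), where ℤ^n acts on A by translation: (z.F)(x) = F(x + z). Explicitly: c_S(x; u, v) + c_S(x; u+v, w) = c_S(x+u; v, w) + c_S(x; u, v+w) for all x ∈ ℝ^n and u, v, w ∈ ℤ^n. -/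
/-- `c_S(x; u, v) := Σ_{p,q,r} S_{pqr} x_p u_q v_r (mod ℤ)`, a 2-cochain on `ℤⁿ` with values
in `A = Map(ℝⁿ, ℝ/ℤ)` (written as a function of the base point `x ∈ ℝⁿ`). -/
noncomputable def cS (n : ℕ) (S : Fin n → Fin n → Fin n → ℤ)
    (x : Fin n → ℝ) (u v : Fin n → ℤ) : AddCircle (1 : ℝ) :=
  ((∑ p, ∑ q, ∑ r, (S p q r : ℝ) * x p * (u q : ℝ) * (v r : ℝ) : ℝ) : AddCircle (1 : ℝ))

/-- for a totally antisymmetric integral collection `S_{pqr}`, `c_S` is a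
2-cocycle on `ℤⁿ` with values in `Map(ℝⁿ, ℝ/ℤ)`, where `ℤⁿ` acts by translation:
`c_S(x; u, v) + c_S(x; u+v, w) = c_S(x+u; v, w) + c_S(x; u, v+w)`. -/
theorem stmt_11 (n : ℕ) (S : Fin n → Fin n → Fin n → ℤ)
    (h1 : ∀ p q r, S p q r = -S q p r) (h2 : ∀ p q r, S p q r = -S p r q) :
    ∀ (x : Fin n → ℝ) (u v w : Fin n → ℤ),
      cS n S x u v + cS n S x (u + v) w =
        cS n S (x + fun p => (u p : ℝ)) v w + cS n S x u (v + w) := by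
  intro x u v w
  unfold cS
  rw [← QuotientAddGroup.mk_add, ← QuotientAddGroup.mk_add, QuotientAddGroup.eq_iff_sub_mem]
  refine ⟨-∑ p, ∑ q, ∑ r, S p q r * u p * v q * w r, ?_⟩
  simp only [zsmul_eq_mul, mul_one]
  push_cast
  simp only [← Finset.sum_neg_distrib, ← Finset.sum_add_distrib, ← Finset.sum_sub_distrib]
  apply Finset.sum_congr rfl
  intro p _
  apply Finset.sum_congr rfl
  intro q _
  apply Finset.sum_congr rfl
  intro r _
  simp only [Pi.add_apply, Int.cast_add]
  ring
end

section
/- Let 1 → N → \hat{G} →^q G → 1 be a group extension, H a group, and α : N → H a homomorphism such that α induces an isomorphism N/ker(α) ≅ im(α). Let μ : G → \hat{G} be a normalized set-theoretic section of q, and ν : G → H a normalized map. Then there exists a (unique) group homomorphism \hat{α} : \hat{G} → H with \hat{α}|_N = α and \hat{α} ∘ μ = ν if and only if: (i) im(α) is normal in the subgroup of H generated by im(α) and ν(G); (ii) α ∘ δ_μ = δ_ν, where δ_σ(g,g') := σ(g)σ(g')σ(gg')^{-1}; and (iii) for all g ∈ G and n ∈ N, α(μ(g) n μ(g)^{-1})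 = ν(g) α(n) ν(g)^{-1}. -/
/-- given an extension `1 → N → Ĝ →^q G → 1`, a homomorphism `α : N → H`,
a normalized section `μ` of `q` and a normalized map `ν : G → H`, there is a (unique)
homomorphism `α̂ : Ĝ → H` with `α̂|_N = α` and `α̂ ∘ μ = ν` iff (i) `im(α)` is normal in the
subgroup generated by `im(α)` and `ν(G)`, (ii) `α ∘ δ_μ = δ_ν`, and (iii) `α` intertwines
the conjugation by `μ(g)` with conjugation by `ν(g)`. -/
theorem stmt_14 {Nn Gh G H : Type*} [Group Nn] [Group Gh] [Group G] [Group H]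
    (i : Nn →* Gh) (q : Gh →* G) (hi : Function.Injective i)
    (hq : Function.Surjective q) (hker : ∀ x : Gh, q x = 1 ↔ x ∈ i.range)
    (α : Nn →* H)
    (μ : G → Gh) (hμ : ∀ g, q (μ g) = g) (hμ1 : μ 1 = 1)
    (ν : G → H) (hν1 : ν 1 = 1) :
    (∃! F : Gh →* H, (∀ n, F (i n) = α n) ∧ ∀ g, F (μ g) = ν g) ↔
      ((∀ k ∈ Subgroup.closure ((α.range : Set H) ∪ Set.range ν),
          ∀ h ∈ α.range, k * h * k⁻¹ ∈ α.range) ∧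
        (∀ (g g' : G) (m : Nn), i m = μ g * μ g' * (μ (g * g'))⁻¹ →
          α m = ν g * ν g' * (ν (g * g'))⁻¹) ∧
        (∀ (g : G) (n m : Nn), i m = μ g * i n * (μ g)⁻¹ →
          α m = ν g * α n * (ν g)⁻¹)) := by
  have hqi : ∀ n : Nn, q (i n) = 1 := fun n => (hker (i n)).mpr ⟨n, rfl⟩
  constructor
  · rintro ⟨F, ⟨hFi, hFμ⟩, -⟩
    refine ⟨?_, ?_, ?_⟩
    · -- (i) normality
      have hS : ((α.range : Set H) ∪ Set.range ν) ⊆ ((Subgroup.normalizer (α.range : Set H)) : Set H) := by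
        rintro x (hx | ⟨g, rfl⟩)
        · exact Subgroup.le_normalizer hx
        · rw [SetLike.mem_coe, Subgroup.mem_normalizer_iff]
          intro h
          constructor
          · rintro ⟨n, rfl⟩
            obtain ⟨m, hm⟩ : μ g * i n * (μ g)⁻¹ ∈ i.range :=
              (hker _).mp (by simp [hμ, hqi])
            refine ⟨m, ?_⟩
            have := congrArg F hm
            simpa [hFi, hFμ, map_mul, map_inv] using this
          · rintro ⟨m, hm⟩
            obtain ⟨m', hm'⟩ : (μ g)⁻¹ * i m * μ g ∈ i.range :=
              (hker _).mp (by simp [hμ, hqi])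
            refine ⟨m', ?_⟩
            have h1 := congrArg F hm'
            simp only [hFi, map_mul, map_inv, hFμ] at h1
            rw [h1, hm]
            group
      intro k hk h hh
      have hk' : k ∈ Subgroup.normalizer (α.range : Set H) := by
        have := (Subgroup.closure_le (Subgroup.normalizer (α.range : Set H))).mpr hS
        exact this hk
      exact ((Subgroup.mem_normalizer_iff.mp hk') h).mp hh
    · intro g g' m hm
      have := congrArg F hm
      simpa [hFi, hFμ, map_mul, map_inv] using this
    · intro g n m hm
      have := congrArg F hm
      simpa [hFi, hFμ, map_mul, map_inv] using this
  · rintro ⟨-, h2, h3⟩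
    have hmem : ∀ x : Gh, x * (μ (q x))⁻¹ ∈ i.range := by
      intro x
      exact (hker _).mp (by simp [hμ])
    -- the "N-part" of each element
    let σ : Gh → Nn := fun x => (hmem x).choose
    have hσ : ∀ x : Gh, i (σ x) = x * (μ (q x))⁻¹ := fun x => (hmem x).choose_spec
    have hσ' : ∀ x : Gh, x = i (σ x) * μ (q x) := by
      intro x; rw [hσ]; group
    have map_mul : ∀ x y : Gh,
        α (σ (x * y)) * ν (q (x * y)) = (α (σ x) * ν (q x)) * (α (σ y) * ν (q y)) := by
      intro x y
      set g := q x with hg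
      set g' := q y with hg'
      obtain ⟨m1, hm1⟩ : μ g * i (σ y) * (μ g)⁻¹ ∈ i.range :=
        (hker _).mp (by simp [hμ, hqi])
      obtain ⟨m2, hm2⟩ : μ g * μ g' * (μ (g * g'))⁻¹ ∈ i.range :=
        (hker _).mp (by rw [map_mul, map_mul, map_inv, hμ, hμ, hμ]; group)
      have hqxy : q (x * y) = g * g' := by rw [map_mul]
      have hσxy : σ (x * y) = σ x * m1 * m2 := by
        apply hi
        rw [hσ, hqxy]
        simp only [map_mul, hm1, hm2]
        conv_lhs => rw [hσ' x, hσ' y]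
        group
        rfl
      rw [hσxy, hqxy, map_mul, map_mul, h3 g (σ y) m1 hm1, h2 g g' m2 hm2]
      group
    refine ⟨{ toFun := fun x => α (σ x) * ν (q x),
              map_one' := ?_, map_mul' := map_mul }, ⟨?_, ?_⟩, ?_⟩
    · have : σ (1 : Gh) = 1 := by
        apply hi
        rw [hσ]
        simp [hμ1]
      simp [this, hν1]
    · intro n
      have h1 : σ (i n) = n := by
        apply hi
        rw [hσ, hqi, hμ1]
        group
      simp [h1, hqi, hν1]
    · intro g
      have h1 : σ (μ g) = 1 := by
        apply hi
        rw [hσ, hμ]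
        simp
      simp [h1, hμ]
    · rintro F' ⟨hF'i, hF'μ⟩
      ext x
      conv_lhs => rw [hσ' x]
      simp [map_mul, hF'i, hF'μ]
end

section
/- Let (α : \hat{N} → G, \hat{S}) be a crossed module with N = im(α), Z = ker(α), and let (f, σ) be a structural cocycle, i.e., σ : G/N → G a normalized section of the quotient map q : G → G/N, f : G/N × G/N → \hat{N} normalized with α ∘ f = δ_σ and d_{\hat{S}∘σ} f = 1. Then the set \hat{N} × G/N with multiplication (n, h)(n', h') := (n · \hat{S}(σ(h))(n') · f(h,h'), hh') is a group, it is an extension of G/N by \hat{N}, and the map \hat{α}(n, h) := α(n) σ(h) is a group homomorphism to G satisfying \hat{α}|_{\hat{N}} = α and \hat{S} ∘ \hat{α} = C_{\hat{G}} (the conjugation action of the new group on \hat{N}). -/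
/-- given a crossed module `(α, Ŝ)` and a structural cocycle `(f, σ)`, the set
`N̂ × G/N` with multiplication `(n,h)(n',h') = (n · Ŝ(σ(h))(n') · f(h,h'), hh')` is a group,
an extension of `G/N` by `N̂`, and `α̂(n,h) := α(n)σ(h)` is a homomorphism to `G` restricting
to `α` on `N̂` and satisfying `Ŝ ∘ α̂ = C_{Ĝ}`. -/
theorem stmt_15 {Nh G : Type*} [Group Nh] [Group G]
    (α : Nh →* G) (Sh : G →* MulAut Nh)
    (cm1 : ∀ (g : G) (x : Nh), α (Sh g x) = g * α x * g⁻¹)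
    (cm2 : ∀ (y x : Nh), Sh (α y) x = y * x * y⁻¹)
    [α.range.Normal]
    (σ : G ⧸ α.range → G)
    (hσ : ∀ h, QuotientGroup.mk (σ h) = h) (hσ1 : σ 1 = 1)
    (f : G ⧸ α.range → G ⧸ α.range → Nh)
    (hf1 : ∀ h, f 1 h = 1 ∧ f h 1 = 1)
    (hαf : ∀ h h', α (f h h') = σ h * σ h' * (σ (h * h'))⁻¹)
    (hdf : ∀ h h' h'', Sh (σ h) (f h' h'') * f h (h' * h'') = f h h' * f (h * h') h'') :
    let m : Nh × (G ⧸ α.range) → Nh × (G ⧸ α.range) → Nh × (G ⧸ α.range) :=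
      fun x y => (x.1 * Sh (σ x.2) y.1 * f x.2 y.2, x.2 * y.2)
    let αh : Nh × (G ⧸ α.range) → G := fun x => α x.1 * σ x.2
    -- the multiplication is a group law
    (∀ x y z, m (m x y) z = m x (m y z)) ∧
    (∀ x, m (1, 1) x = x ∧ m x (1, 1) = x) ∧
    (∀ x, ∃ y, m x y = (1, 1) ∧ m y x = (1, 1)) ∧
    -- it is an extension of G/N by N̂
    (∀ x y, (m x y).2 = x.2 * y.2) ∧
    (∀ x : Nh × (G ⧸ α.range), x.2 = 1 ↔ ∃ nn : Nh, x = (nn, 1)) ∧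
    -- α̂ is a homomorphism extending α with Ŝ ∘ α̂ = conjugation action
    (∀ x y, αh (m x y) = αh x * αh y) ∧
    (∀ nn : Nh, αh (nn, 1) = α nn) ∧
    (∀ x (nn : Nh), m x (nn, 1) = m (Sh (αh x) nn, 1) x) := by
  intro m αh
  have hm : ∀ x y : Nh × (G ⧸ α.range),
      m x y = (x.1 * Sh (σ x.2) y.1 * f x.2 y.2, x.2 * y.2) := fun _ _ => rfl
  -- key commutation lemma
  have key : ∀ (h h' : G ⧸ α.range) (z : Nh),
      f h h' * Sh (σ (h * h')) z = Sh (σ h) (Sh (σ h') z) * f h h' := by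
    intro h h' z
    have h1 : Sh (α (f h h')) (Sh (σ (h * h')) z)
        = f h h' * Sh (σ (h * h')) z * (f h h')⁻¹ := cm2 _ _
    have h2 : Sh (α (f h h')) (Sh (σ (h * h')) z) = Sh (σ h) (Sh (σ h') z) := by
      rw [hαf]
      simp [map_mul, map_inv]
    rw [h2] at h1
    rw [h1]
    group
  have assoc : ∀ x y z, m (m x y) z = m x (m y z) := by
    intro x y z
    simp only [hm]
    refine Prod.ext ?_ (mul_assoc _ _ _)
    show x.1 * Sh (σ x.2) y.1 * f x.2 y.2 * Sh (σ (x.2 * y.2)) z.1 * f (x.2 * y.2) z.2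
        = x.1 * Sh (σ x.2) (y.1 * Sh (σ y.2) z.1 * f y.2 z.2) * f x.2 (y.2 * z.2)
    calc x.1 * Sh (σ x.2) y.1 * f x.2 y.2 * Sh (σ (x.2 * y.2)) z.1 * f (x.2 * y.2) z.2
        = x.1 * Sh (σ x.2) y.1 * (f x.2 y.2 * Sh (σ (x.2 * y.2)) z.1) * f (x.2 * y.2) z.2 := by
          group
      _ = x.1 * Sh (σ x.2) y.1 * (Sh (σ x.2) (Sh (σ y.2) z.1) * f x.2 y.2) * f (x.2 * y.2) z.2 := by
          rw [key]
      _ = x.1 * Sh (σ x.2) y.1 * Sh (σ x.2) (Sh (σ y.2) z.1) * (f x.2 y.2 * f (x.2 * y.2) z.2) := by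
          group
      _ = x.1 * Sh (σ x.2) y.1 * Sh (σ x.2) (Sh (σ y.2) z.1)
            * (Sh (σ x.2) (f y.2 z.2) * f x.2 (y.2 * z.2)) := by rw [hdf]
      _ = x.1 * Sh (σ x.2) (y.1 * Sh (σ y.2) z.1 * f y.2 z.2) * f x.2 (y.2 * z.2) := by
          simp only [map_mul]; group
  have idl : ∀ x, m (1, 1) x = x := by
    intro x
    simp only [hm, hσ1, (hf1 _).1]
    simp
  have idr : ∀ x, m x (1, 1) = x := by
    intro x
    simp only [hm, (hf1 _).2]
    simp
  have hid : ∀ x, m (1, 1) x = x ∧ m x (1, 1) = x := fun x => ⟨idl x, idr x⟩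
  -- explicit right inverse
  set rinvf : Nh × (G ⧸ α.range) → Nh × (G ⧸ α.range) :=
    fun x => ((Sh (σ x.2)).symm (x.1⁻¹ * (f x.2 x.2⁻¹)⁻¹), x.2⁻¹) with hrinvf
  have rinv : ∀ x, m x (rinvf x) = (1, 1) := by
    intro x
    simp only [hm, hrinvf]
    refine Prod.ext ?_ (mul_inv_cancel _)
    show x.1 * Sh (σ x.2) ((Sh (σ x.2)).symm (x.1⁻¹ * (f x.2 x.2⁻¹)⁻¹)) * f x.2 x.2⁻¹ = 1
    rw [MulEquiv.apply_symm_apply]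
    group
  have inv : ∀ x, ∃ y, m x y = (1, 1) ∧ m y x = (1, 1) := by
    intro x
    refine ⟨rinvf x, rinv x, ?_⟩
    have h2 := rinv (rinvf x)
    calc m (rinvf x) x = m (m (rinvf x) x) (1, 1) := (idr _).symm
      _ = m (m (rinvf x) x) (m (rinvf x) (rinvf (rinvf x))) := by rw [h2]
      _ = m (rinvf x) (m x (m (rinvf x) (rinvf (rinvf x)))) := by rw [assoc]
      _ = m (rinvf x) (m (m x (rinvf x)) (rinvf (rinvf x))) := by rw [assoc]
      _ = m (rinvf x) (m (1, 1) (rinvf (rinvf x))) := by rw [rinv x]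
      _ = m (rinvf x) (rinvf (rinvf x)) := by rw [idl]
      _ = (1, 1) := h2
  refine ⟨assoc, hid, inv, fun x y => rfl, ?_, ?_, ?_, ?_⟩
  · intro x
    constructor
    · intro h
      exact ⟨x.1, Prod.ext rfl h⟩
    · rintro ⟨nn, rfl⟩
      rfl
  · intro x y
    show α (x.1 * Sh (σ x.2) y.1 * f x.2 y.2) * σ (x.2 * y.2)
        = α x.1 * σ x.2 * (α y.1 * σ y.2)
    simp only [map_mul, cm1, hαf]
    group
  · intro nn
    show α nn * σ 1 = α nn
    rw [hσ1, mul_one]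
  · intro x nn
    refine Prod.ext ?_ (by simp [hm])
    show x.1 * Sh (σ x.2) nn * f x.2 1 = Sh (αh x) nn * Sh (σ 1) x.1 * f 1 x.2
    simp only [hσ1, (hf1 _).1, (hf1 _).2, map_one, MulAut.one_apply, mul_one]
    show x.1 * Sh (σ x.2) nn = Sh (α x.1 * σ x.2) nn * x.1
    simp only [map_mul, MulAut.mul_apply, cm2]
    group
end

section
/- Let (α, \hat{S}) be a crossed module (abstract groups), and let (f, σ) and (f', σ') be two structural cocycles. The resulting extensions \hat{N} ×_{(f,σ)} G/N and \hat{N} ×_{(f',σ')} G/N are equivalent as extensions of the crossed module if and only if there exists a normalized map c : G/N → \hat{N} with f'(h,h') = c(h) · \hat{S}(σ(h))(c(h')) · f(h,h') · c(hh')^{-1} and σ'(h) = α(c(h)) · σ(h) for all h, h' ∈ G/N; in that case (n,h) ↦ (n·c(h), h) is an equivalence from \hat{N} ×_{(f',σ')} G/N to \hat{N} ×_{(f,σ)} G/N. -/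
/-- for two structural cocycles `(f,σ)` and `(f',σ')` of a crossed module
`(α, Ŝ)`, the extensions `N̂ ×_{(f,σ)} G/N` and `N̂ ×_{(f',σ')} G/N` are equivalent (as
extensions of the crossed module) iff there is a normalized `c : G/N → N̂` with
`f'(h,h') = c(h) · Ŝ(σ(h))(c(h')) · f(h,h') · c(hh')⁻¹` and `σ'(h) = α(c(h)) · σ(h)`;
in that case `(n,h) ↦ (n·c(h), h)` is an equivalence, and all equivalences are of this form. -/
theorem stmt_16 {Nh G : Type*} [Group Nh] [Group G]
    (α : Nh →* G) (Sh : G →* MulAut Nh)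
    (cm1 : ∀ (g : G) (x : Nh), α (Sh g x) = g * α x * g⁻¹)
    (cm2 : ∀ (y x : Nh), Sh (α y) x = y * x * y⁻¹)
    [α.range.Normal]
    -- the structural cocycle (f, σ)
    (σ : G ⧸ α.range → G)
    (hσ : ∀ h, QuotientGroup.mk (σ h) = h) (hσ1 : σ 1 = 1)
    (f : G ⧸ α.range → G ⧸ α.range → Nh)
    (hf1 : ∀ h, f 1 h = 1 ∧ f h 1 = 1)
    (hαf : ∀ h h', α (f h h') = σ h * σ h' * (σ (h * h'))⁻¹)
    (hdf : ∀ h h' h'', Sh (σ h) (f h' h'') * f h (h' * h'') = f h h' * f (h * h') h'')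
    -- the structural cocycle (f', σ')
    (σ' : G ⧸ α.range → G)
    (hσ' : ∀ h, QuotientGroup.mk (σ' h) = h) (hσ'1 : σ' 1 = 1)
    (f' : G ⧸ α.range → G ⧸ α.range → Nh)
    (hf'1 : ∀ h, f' 1 h = 1 ∧ f' h 1 = 1)
    (hαf' : ∀ h h', α (f' h h') = σ' h * σ' h' * (σ' (h * h'))⁻¹)
    (hdf' : ∀ h h' h'', Sh (σ' h) (f' h' h'') * f' h (h' * h'') = f' h h' * f' (h * h') h'') :
    let Q := G ⧸ α.range
    let m : Nh × Q → Nh × Q → Nh × Q :=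
      fun x y => (x.1 * Sh (σ x.2) y.1 * f x.2 y.2, x.2 * y.2)
    let m' : Nh × Q → Nh × Q → Nh × Q :=
      fun x y => (x.1 * Sh (σ' x.2) y.1 * f' x.2 y.2, x.2 * y.2)
    let αh : Nh × Q → G := fun x => α x.1 * σ x.2
    let αh' : Nh × Q → G := fun x => α x.1 * σ' x.2
    let isEquiv : (Nh × Q → Nh × Q) → Prop := fun φ =>
      Function.Bijective φ ∧ (∀ x y, φ (m' x y) = m (φ x) (φ y)) ∧
        (∀ nn : Nh, φ (nn, 1) = (nn, 1)) ∧ (∀ x, αh (φ x) = αh' x)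
    let rel : (Q → Nh) → Prop := fun c =>
      c 1 = 1 ∧ (∀ h h', f' h h' = c h * Sh (σ h) (c h') * f h h' * (c (h * h'))⁻¹) ∧
        (∀ h, σ' h = α (c h) * σ h)
    -- the equivalence criterion
    ((∃ φ, isEquiv φ) ↔ ∃ c : Q → Nh, rel c) ∧
    -- in that case the explicit map is an equivalence ...
    (∀ c : Q → Nh, rel c → isEquiv (fun x => (x.1 * c x.2, x.2))) ∧
    -- ... and all equivalences are of this form
    (∀ φ, isEquiv φ → ∃ c : Q → Nh, rel c ∧ φ = fun x => (x.1 * c x.2, x.2)) := by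

  intro Q m m' αh αh' isEquiv rel
  -- quotient values of the structure maps
  have hmka : ∀ (n : Nh) (g : G), (QuotientGroup.mk (α n * g) : Q) = QuotientGroup.mk g := by
    intro n g
    have : ((α n : G) : Q) = 1 := (QuotientGroup.eq_one_iff _).mpr (MonoidHom.mem_range.mpr ⟨n, rfl⟩)
    rw [QuotientGroup.mk_mul, this, one_mul]
  have bullet2 : ∀ c : Q → Nh, rel c → isEquiv (fun x => (x.1 * c x.2, x.2)) := by
    rintro c ⟨hc1, hcf, hcσ⟩
    refine ⟨?_, ?_, ?_, ?_⟩
    · rw [Function.bijective_iff_has_inverse]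
      exact ⟨fun x => (x.1 * (c x.2)⁻¹, x.2), fun x => by simp [mul_assoc],
        fun x => by simp [mul_assoc]⟩
    · rintro ⟨n, h⟩ ⟨n', h'⟩
      simp only [m, m', Prod.mk.injEq]
      refine ⟨?_, by simp⟩
      rw [hcf h h', hcσ h, map_mul Sh, MulAut.mul_apply, cm2]
      simp only [map_mul]
      group
    · intro nn; simp [hc1]
    · rintro ⟨n, h⟩
      simp only [αh, αh']
      rw [hcσ h, map_mul, mul_assoc]
  have bullet3 : ∀ φ, isEquiv φ → ∃ c : Q → Nh, rel c ∧ φ = fun x => (x.1 * c x.2, x.2) := by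
    rintro φ ⟨hbij, hmul, hid, hα⟩
    have hsnd : ∀ x, (φ x).2 = x.2 := by
      intro x
      have h1 := hα x
      simp only [αh, αh'] at h1
      have h2 := congrArg (QuotientGroup.mk : G → Q) h1
      rwa [hmka, hmka, hσ, hσ'] at h2
    set c : Q → Nh := fun h => (φ (1, h)).1 with hc
    have hφ1 : ∀ h : Q, φ (1, h) = (c h, h) := fun h => Prod.ext rfl (hsnd (1, h))
    have hform : ∀ x : Nh × Q, φ x = (x.1 * c x.2, x.2) := by
      rintro ⟨n, h⟩
      have key := hmul (n, 1) (1, h)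
      simp only [m, m', hσ'1, hσ1, (hf'1 h).1, (hf1 h).1, map_one, MulAut.one_apply,
        mul_one, one_mul, hid n, hφ1 h] at key
      exact key
    have hcσ : ∀ h, σ' h = α (c h) * σ h := by
      intro h
      have h1 := hα (1, h)
      simp only [αh, αh', hφ1 h, map_one, one_mul] at h1
      exact h1.symm
    have hcf : ∀ h h', f' h h' = c h * Sh (σ h) (c h') * f h h' * (c (h * h'))⁻¹ := by
      intro h h'
      have key := hmul (1, h) (1, h')
      simp only [m, m', hform, hφ1, one_mul, map_one, MulAut.one_apply, mul_one,
        Prod.mk.injEq] at key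
      have := key.1
      rw [eq_comm, ← this]
      group
    have hc1 : c 1 = 1 := by
      have := hid 1
      simp only [hform] at this
      have := congrArg Prod.fst this
      simpa using this
    exact ⟨c, ⟨hc1, hcf, hcσ⟩, funext hform⟩
  refine ⟨⟨fun ⟨φ, hφ⟩ => ?_, fun ⟨c, hc⟩ => ⟨_, bullet2 c hc⟩⟩, bullet2, bullet3⟩
  obtain ⟨c, hc, -⟩ := bullet3 φ hφ
  exact ⟨c, hc⟩
end

section
/- Let (α, \hat{S}) be a crossed module with Z = ker(α) and fixed structural cocycle (f, σ). If (f'', σ) is another structural cocycle with the same section σ, then β := f^{-1}·f'' takes values in Z and is a 2-cocycle in Z^2(G/N, Z) for the induced G/N-action T on Z. Moreover, the extensions associated to (f,σ) and (f'',σ) are equivalent as crossed-module extensions if and only if β is a coboundary, i.e., β = d_T c for some normalized c : G/N → Z. -/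
/-- shuffle a central-ish element across a product -/
private lemma stmt17_shuffle {M : Type*} [Group M] (a b x y : M) (h : x * b = b * x) :
    a * x * (b * y) = a * b * (x * y) := by
  rw [mul_assoc a x, ← mul_assoc x b, h, mul_assoc b x, ← mul_assoc]

private lemma stmt17_aux1 {M : Type*} [Group M] (F z1 z2 z3 : M)
    (h1 : ∀ t : M, z1 * t = t * z1) (h2 : ∀ t : M, z2 * t = t * z2) :
    F⁻¹ * (z1 * z2 * F * z3⁻¹) = z2 * z3⁻¹ * z1 := by
  simp only [mul_assoc]
  rw [h1 (z2 * (F * z3⁻¹)), mul_assoc z2 (F * z3⁻¹) z1, mul_assoc F z3⁻¹ z1,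
      h2 (F * (z3⁻¹ * z1)), mul_assoc F (z3⁻¹ * z1) z2, inv_mul_cancel_left,
      h2 (z3⁻¹ * z1)]

private lemma stmt17_aux2 {M : Type*} [Group M] (x A F z1 z2 z3 : M)
    (h1 : ∀ t : M, z1 * t = t * z1) (h2 : ∀ t : M, z2 * t = t * z2)
    (h3 : ∀ t : M, z3 * t = t * z3) :
    x * A * (F * (z2 * z3⁻¹ * z1)) * z3 = x * z1 * (A * z2) * F := by
  simp only [mul_assoc]
  rw [← h3 z1, inv_mul_cancel_left, h1 (A * (z2 * F)), mul_assoc A (z2 * F) z1,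
      mul_assoc z2 F z1, h2 (F * z1), mul_assoc F z1 z2, h1 z2]


/-- for two structural cocycles `(f,σ)` and `(f'',σ)` with the same section,
`β := f⁻¹·f''` takes values in `Z = ker(α)` and is a 2-cocycle for the induced `G/N`-action
`T` on `Z`; the two extensions are equivalent as crossed-module extensions iff `β` is a
coboundary `d_T c` for some normalized `c : G/N → Z`. -/
theorem stmt_17 {Nh G : Type*} [Group Nh] [Group G]
    (α : Nh →* G) (Sh : G →* MulAut Nh)
    (cm1 : ∀ (g : G) (x : Nh), α (Sh g x) = g * α x * g⁻¹)
    (cm2 : ∀ (y x : Nh), Sh (α y) x = y * x * y⁻¹)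
    [α.range.Normal]
    -- the common section σ
    (σ : G ⧸ α.range → G)
    (hσ : ∀ h, QuotientGroup.mk (σ h) = h) (hσ1 : σ 1 = 1)
    -- the structural cocycle (f, σ)
    (f : G ⧸ α.range → G ⧸ α.range → Nh)
    (hf1 : ∀ h, f 1 h = 1 ∧ f h 1 = 1)
    (hαf : ∀ h h', α (f h h') = σ h * σ h' * (σ (h * h'))⁻¹)
    (hdf : ∀ h h' h'', Sh (σ h) (f h' h'') * f h (h' * h'') = f h h' * f (h * h') h'')
    -- the structural cocycle (f'', σ)
    (f'' : G ⧸ α.range → G ⧸ α.range → Nh)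
    (hf''1 : ∀ h, f'' 1 h = 1 ∧ f'' h 1 = 1)
    (hαf'' : ∀ h h', α (f'' h h') = σ h * σ h' * (σ (h * h'))⁻¹)
    (hdf'' : ∀ h h' h'', Sh (σ h) (f'' h' h'') * f'' h (h' * h'') =
      f'' h h' * f'' (h * h') h'') :
    let Q := G ⧸ α.range
    let β : Q → Q → Nh := fun h h' => (f h h')⁻¹ * f'' h h'
    let m : Nh × Q → Nh × Q → Nh × Q :=
      fun x y => (x.1 * Sh (σ x.2) y.1 * f x.2 y.2, x.2 * y.2)
    let m'' : Nh × Q → Nh × Q → Nh × Q :=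
      fun x y => (x.1 * Sh (σ x.2) y.1 * f'' x.2 y.2, x.2 * y.2)
    let αh : Nh × Q → G := fun x => α x.1 * σ x.2
    let isEquiv : (Nh × Q → Nh × Q) → Prop := fun φ =>
      Function.Bijective φ ∧ (∀ x y, φ (m'' x y) = m (φ x) (φ y)) ∧
        (∀ nn : Nh, φ (nn, 1) = (nn, 1)) ∧ (∀ x, αh (φ x) = αh x)
    -- β takes values in Z = ker α
    (∀ h h', β h h' ∈ α.ker) ∧
    -- β is a 2-cocycle for the induced action T([g]) = Ŝ(g) on Z
    (∀ h h' h'', Sh (σ h) (β h' h'') * β h (h' * h'') = β h h' * β (h * h') h'') ∧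
    -- the extensions are equivalent iff β is a coboundary d_T c
    ((∃ φ, isEquiv φ) ↔
      ∃ c : Q → Nh, (∀ h, c h ∈ α.ker) ∧ c 1 = 1 ∧
        ∀ h h', β h h' = Sh (σ h) (c h') * (c (h * h'))⁻¹ * c h) := by
  intro Q β m m'' αh isEquiv
  -- ker α is central in Nh
  have hcen : ∀ z : Nh, α z = 1 → ∀ x : Nh, z * x = x * z := by
    intro z hz x
    have h2 := cm2 z x
    rw [hz, map_one, MulAut.one_apply] at h2
    have h3 : z * x * z⁻¹ * z = x * z := by rw [← h2]
    simpa using h3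
  -- ker α is stable under Sh g
  have hkerSh : ∀ (g : G) (z : Nh), α z = 1 → α (Sh g z) = 1 := by
    intro g z hz
    rw [cm1, hz]
    group
  -- β takes values in ker α
  have hβker : ∀ h h' : Q, α (β h h') = 1 := by
    intro h h'
    show α ((f h h')⁻¹ * f'' h h') = 1
    rw [map_mul, map_inv, hαf, hαf'']
    group
  have hfβ : ∀ h h' : Q, f'' h h' = f h h' * β h h' := by
    intro h h'
    show f'' h h' = f h h' * ((f h h')⁻¹ * f'' h h')
    rw [mul_inv_cancel_left]
  -- the cocycle identity for β
  have hcoc : ∀ h h' h'' : Q,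
      Sh (σ h) (β h' h'') * β h (h' * h'') = β h h' * β (h * h') h'' := by
    intro h h' h''
    have key := hdf'' h h' h''
    rw [hfβ, hfβ, hfβ, hfβ, map_mul] at key
    have hx : Sh (σ h) (β h' h'') * f h (h' * h'') = f h (h' * h'') * Sh (σ h) (β h' h'') :=
      hcen _ (hkerSh (σ h) _ (hβker h' h'')) _
    have hy : β h h' * f (h * h') h'' = f (h * h') h'' * β h h' :=
      hcen _ (hβker h h') _
    rw [stmt17_shuffle _ _ _ _ hx, stmt17_shuffle _ _ _ _ hy, hdf h h' h''] at key
    exact mul_left_cancel key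
  refine ⟨fun h h' => MonoidHom.mem_ker.mpr (hβker h h'), hcoc, ?_, ?_⟩
  · -- equivalence → coboundary
    rintro ⟨φ, hbij, hhom, hfix, hα⟩
    have hmk : ∀ (n : Nh) (q : Q), (QuotientGroup.mk (α n * σ q) : Q) = q := by
      intro n q
      rw [QuotientGroup.mk_mul, (QuotientGroup.eq_one_iff (α n)).mpr (MonoidHom.mem_range.mpr ⟨n, rfl⟩), one_mul, hσ]
    have hsnd : ∀ x : Nh × Q, (φ x).2 = x.2 := by
      intro x
      have h1 : α (φ x).1 * σ (φ x).2 = α x.1 * σ x.2 := hα x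
      have h2 : (QuotientGroup.mk (α (φ x).1 * σ (φ x).2) : Q) =
          QuotientGroup.mk (α x.1 * σ x.2) := by rw [h1]
      rwa [hmk, hmk] at h2
    have hsnd' : ∀ (n : Nh) (q : Q), (φ (n, q)).2 = q := fun n q => hsnd (n, q)
    -- values of the candidate c lie in ker α
    have hck : ∀ h : Q, α ((φ ((1 : Nh), h)).1) = 1 := by
      intro h
      have h1 : α (φ ((1 : Nh), h)).1 * σ (φ ((1 : Nh), h)).2 = α (1 : Nh) * σ h := hα _
      rw [map_one, one_mul] at h1
      rw [hsnd' 1 h] at h1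
      exact mul_right_cancel (h1.trans (one_mul (σ h)).symm)
    -- general form of φ
    have e0 : ∀ (n : Nh) (h : Q), φ (n, h) = (n * (φ ((1 : Nh), h)).1, h) := by
      intro n h
      have em : m'' (n, (1 : Q)) ((1 : Nh), h) = (n, h) := by
        show (n * Sh (σ (1 : Q)) (1 : Nh) * f'' 1 h, (1 : Q) * h) = (n, h)
        rw [hσ1]
        simp [(hf''1 h).1]
      have e1 := hhom (n, (1 : Q)) ((1 : Nh), h)
      rw [em, hfix n] at e1
      have hpair : φ ((1 : Nh), h) = ((φ ((1 : Nh), h)).1, h) :=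
        Prod.ext rfl (hsnd' 1 h)
      rw [hpair] at e1
      rw [e1]
      show (n * Sh (σ (1 : Q)) ((φ ((1 : Nh), h)).1) * f 1 h, (1 : Q) * h) =
        (n * (φ ((1 : Nh), h)).1, h)
      rw [hσ1, (hf1 h).1]
      simp
    refine ⟨fun q => (φ ((1 : Nh), q)).1, fun h => MonoidHom.mem_ker.mpr (hck h), ?_, ?_⟩
    · show (φ ((1 : Nh), (1 : Q))).1 = 1
      rw [hfix 1]
    · intro h h'
      have em : m'' ((1 : Nh), h) ((1 : Nh), h') = (f'' h h', h * h') := by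
        show ((1 : Nh) * Sh (σ h) (1 : Nh) * f'' h h', h * h') = (f'' h h', h * h')
        simp
      have e1 := hhom ((1 : Nh), h) ((1 : Nh), h')
      rw [em, e0 (f'' h h') (h * h'), e0 1 h, e0 1 h'] at e1
      simp only [one_mul] at e1
      have E : f'' h h' * (φ ((1 : Nh), h * h')).1 =
          (φ ((1 : Nh), h)).1 * Sh (σ h) ((φ ((1 : Nh), h')).1) * f h h' :=
        congrArg Prod.fst e1
      have E2 : f'' h h' = (φ ((1 : Nh), h)).1 * Sh (σ h) ((φ ((1 : Nh), h')).1) *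
          f h h' * ((φ ((1 : Nh), h * h')).1)⁻¹ :=
        eq_mul_inv_iff_mul_eq.mpr E
      show (f h h')⁻¹ * f'' h h' =
        Sh (σ h) ((φ ((1 : Nh), h')).1) * ((φ ((1 : Nh), h * h')).1)⁻¹ * (φ ((1 : Nh), h)).1
      rw [E2]
      exact stmt17_aux1 (f h h') _ _ _ (hcen _ (hck h))
        (hcen _ (hkerSh (σ h) _ (hck h')))
  · -- coboundary → equivalence
    rintro ⟨c, hckm, hc1, hcob⟩
    have hck : ∀ h : Q, α (c h) = 1 := fun h => MonoidHom.mem_ker.mp (hckm h)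
    refine ⟨fun x => (x.1 * c x.2, x.2), ⟨?_, ?_⟩, ?_, ?_, ?_⟩
    · -- injective
      intro a b hab
      have hab' : (a.1 * c a.2, a.2) = (b.1 * c b.2, b.2) := hab
      rw [Prod.mk.injEq] at hab'
      obtain ⟨h1, h2⟩ := hab'
      rw [h2] at h1
      exact Prod.ext (mul_right_cancel h1) h2
    · -- surjective
      intro y
      refine ⟨(y.1 * (c y.2)⁻¹, y.2), ?_⟩
      show (y.1 * (c y.2)⁻¹ * c y.2, y.2) = y
      simp
    · -- homomorphism property
      intro x y
      show ((x.1 * Sh (σ x.2) y.1 * f'' x.2 y.2) * c (x.2 * y.2), x.2 * y.2)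
        = ((x.1 * c x.2) * Sh (σ x.2) (y.1 * c y.2) * f x.2 y.2, x.2 * y.2)
      refine Prod.ext ?_ rfl
      show x.1 * Sh (σ x.2) y.1 * f'' x.2 y.2 * c (x.2 * y.2)
        = x.1 * c x.2 * Sh (σ x.2) (y.1 * c y.2) * f x.2 y.2
      rw [map_mul]
      have hf2 : f'' x.2 y.2 =
          f x.2 y.2 * (Sh (σ x.2) (c y.2) * (c (x.2 * y.2))⁻¹ * c x.2) := by
        have hb : (f x.2 y.2)⁻¹ * f'' x.2 y.2 =
            Sh (σ x.2) (c y.2) * (c (x.2 * y.2))⁻¹ * c x.2 := hcob x.2 y.2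
        rw [← hb, mul_inv_cancel_left]
      rw [hf2]
      exact stmt17_aux2 x.1 (Sh (σ x.2) y.1) (f x.2 y.2) (c x.2) (Sh (σ x.2) (c y.2))
        (c (x.2 * y.2)) (hcen _ (hck x.2)) (hcen _ (hkerSh (σ x.2) _ (hck y.2)))
        (hcen _ (hck (x.2 * y.2)))
    · -- fixes Nh
      intro nn
      show (nn * c (1 : Q), (1 : Q)) = (nn, (1 : Q))
      rw [hc1, mul_one]
    · -- compatible with αh
      intro x
      show α (x.1 * c x.2) * σ x.2 = α x.1 * σ x.2
      rw [map_mul, hck x.2, mul_one]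
end

section
/- Let (α, \hat{S}) be a crossed module admitting at least one extension. Then the cohomology group H^2(G/N, Z)_T acts simply transitively on the set Ext(α,\hat{S}) of equivalence classes of extensions of the crossed module, via ([β], [(\hat{N}×_{(f,σ)}G/N, \hat{α}_{(f,σ)})]) ↦ [(\hat{N}×_{(f·β,σ)}G/N, \hat{α}_{(f·β,σ)})]. -/
set_option maxHeartbeats 1000000


/-- for a crossed module `(α, Ŝ)` admitting an extension (represented by a
structural cocycle `(f,σ)`), the group `H²(G/N, Z)_T` acts simply transitively on the set
of equivalence classes of crossed-module extensions via `[β]·[(f,σ)] = [(f·β,σ)]`: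
(1) for every cocycle `β ∈ Z²(G/N,Z)_T`, `(f·β, σ)` is again a structural cocycle;
(2) (transitivity) every extension, i.e. every structural cocycle `(f',σ')`, is equivalent
to `(f·β, σ)` for some `β ∈ Z²(G/N,Z)_T`;
(3) (well-definedness and freeness) `(f·β,σ)` and `(f·β',σ)` give equivalent extensions iff
`β⁻¹·β'` is a coboundary in `B²(G/N,Z)_T`. -/
theorem stmt_18 {Nh G : Type*} [Group Nh] [Group G]
    (α : Nh →* G) (Sh : G →* MulAut Nh)
    (cm1 : ∀ (g : G) (x : Nh), α (Sh g x) = g * α x * g⁻¹)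
    (cm2 : ∀ (y x : Nh), Sh (α y) x = y * x * y⁻¹)
    [α.range.Normal]
    -- a fixed structural cocycle (f, σ), i.e. a fixed extension of the crossed module
    (σ : G ⧸ α.range → G)
    (hσ : ∀ h, QuotientGroup.mk (σ h) = h) (hσ1 : σ 1 = 1)
    (f : G ⧸ α.range → G ⧸ α.range → Nh)
    (hf1 : ∀ h, f 1 h = 1 ∧ f h 1 = 1)
    (hαf : ∀ h h', α (f h h') = σ h * σ h' * (σ (h * h'))⁻¹)
    (hdf : ∀ h h' h'', Sh (σ h) (f h' h'') * f h (h' * h'') = f h h' * f (h * h') h'') :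
    let Q := G ⧸ α.range
    -- normalized 2-cocycles on G/N with values in Z = ker α, for the induced action T
    let Zc : (Q → Q → Nh) → Prop := fun β =>
      (∀ h h', β h h' ∈ α.ker) ∧ (∀ h, β 1 h = 1 ∧ β h 1 = 1) ∧
        (∀ h h' h'', Sh (σ h) (β h' h'') * β h (h' * h'') = β h h' * β (h * h') h'')
    -- coboundaries
    let Bc : (Q → Q → Nh) → Prop := fun β =>
      ∃ c : Q → Nh, (∀ h, c h ∈ α.ker) ∧ c 1 = 1 ∧
        ∀ h h', β h h' = Sh (σ h) (c h') * (c (h * h'))⁻¹ * c h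
    -- structural cocycles
    let SC : (Q → Q → Nh) → (Q → G) → Prop := fun f' σ' =>
      (∀ h, QuotientGroup.mk (σ' h) = h) ∧ σ' 1 = 1 ∧
        (∀ h, f' 1 h = 1 ∧ f' h 1 = 1) ∧
        (∀ h h', α (f' h h') = σ' h * σ' h' * (σ' (h * h'))⁻¹) ∧
        (∀ h h' h'', Sh (σ' h) (f' h' h'') * f' h (h' * h'') = f' h h' * f' (h * h') h'')
    -- the extension associated to a structural cocycle
    let mext : (Q → Q → Nh) → (Q → G) → (Nh × Q → Nh × Q → Nh × Q) :=
      fun f' σ' x y => (x.1 * Sh (σ' x.2) y.1 * f' x.2 y.2, x.2 * y.2)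
    -- equivalence of the crossed-module extensions given by (f₁,σ₁) and (f₂,σ₂)
    let equiv : (Q → Q → Nh) → (Q → G) → (Q → Q → Nh) → (Q → G) → Prop :=
      fun f₁ σ₁ f₂ σ₂ => ∃ φ : Nh × Q → Nh × Q,
        Function.Bijective φ ∧
        (∀ x y, φ (mext f₂ σ₂ x y) = mext f₁ σ₁ (φ x) (φ y)) ∧
        (∀ nn : Nh, φ (nn, 1) = (nn, 1)) ∧
        (∀ x : Nh × Q, α (φ x).1 * σ₁ (φ x).2 = α x.1 * σ₂ x.2)
    -- (1) the action is defined: f·β is again a structural cocycle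
    (∀ β, Zc β → SC (fun h h' => f h h' * β h h') σ) ∧
    -- (2) transitivity
    (∀ f' σ', SC f' σ' →
      ∃ β, Zc β ∧ equiv (fun h h' => f h h' * β h h') σ f' σ') ∧
    -- (3) the action descends to cohomology classes and is free
    (∀ β β', Zc β → Zc β' →
      (equiv (fun h h' => f h h' * β h h') σ (fun h h' => f h h' * β' h h') σ ↔
        Bc (fun h h' => (β h h')⁻¹ * β' h h'))) := by
  intro Q Zc Bc SC mext equiv
  classical
  -- basic consequences of the crossed module axioms
  have hswap : ∀ z : Nh, α z = 1 → ∀ x : Nh, z * x = x * z := by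
    intro z hz x
    have h2 := cm2 z x
    rw [hz, map_one] at h2
    have h3 : z * x * z⁻¹ = x := by simpa using h2.symm
    calc z * x = (z * x * z⁻¹) * z := by group
      _ = x * z := by rw [h3]
  have hkerS : ∀ (g : G) (z : Nh), α z = 1 → α (Sh g z) = 1 := by
    intro g z hz; rw [cm1, hz]; group
  have hconj : ∀ (y : Nh) (g : G) (x : Nh), Sh (α y * g) x = y * Sh g x * y⁻¹ := by
    intro y g x; rw [map_mul, MulAut.mul_apply, cm2]
  have hre : ∀ A B C D E Fq Gq H : Nh, (∀ x, B * x = x * B) → (∀ x, Fq * x = x * Fq) →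
      A * C = E * Gq → B * D = Fq * H → A * B * (C * D) = E * Fq * (Gq * H) := by
    intro A B C D E Fq Gq H hB hF h1 h2
    calc A * B * (C * D) = A * (B * C) * D := by group
      _ = A * (C * B) * D := by rw [hB]
      _ = (A * C) * (B * D) := by group
      _ = (E * Gq) * (Fq * H) := by rw [h1, h2]
      _ = E * (Gq * Fq) * H := by group
      _ = E * (Fq * Gq) * H := by rw [hF]
      _ = E * Fq * (Gq * H) := by group
  have hre2 : ∀ A B C D E Fq Gq H : Nh, (∀ x, B * x = x * B) → (∀ x, Fq * x = x * Fq) →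
      A * C = E * Gq → A * B * (C * D) = E * Fq * (Gq * H) → B * D = Fq * H := by
    intro A B C D E Fq Gq H hB hF h1 h2
    have h3 : (A * C) * (B * D) = (A * C) * (Fq * H) := by
      calc (A * C) * (B * D) = A * (C * B) * D := by group
        _ = A * (B * C) * D := by rw [hB]
        _ = A * B * (C * D) := by group
        _ = E * Fq * (Gq * H) := h2
        _ = E * (Fq * Gq) * H := by group
        _ = E * (Gq * Fq) * H := by rw [hF]
        _ = (E * Gq) * (Fq * H) := by group
        _ = (A * C) * (Fq * H) := by rw [h1]
    exact mul_left_cancel h3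
  refine ⟨?_, ?_, ?_⟩
  · -- (1)
    rintro β ⟨hβk, hβ1, hβc⟩
    have hβker : ∀ h k, α (β h k) = 1 := fun h k => MonoidHom.mem_ker.mp (hβk h k)
    refine ⟨hσ, hσ1, ?_, ?_, ?_⟩
    · intro h
      constructor
      · show f 1 h * β 1 h = 1
        rw [(hf1 h).1, (hβ1 h).1, mul_one]
      · show f h 1 * β h 1 = 1
        rw [(hf1 h).2, (hβ1 h).2, mul_one]
    · intro h k
      show α (f h k * β h k) = σ h * σ k * (σ (h * k))⁻¹
      rw [map_mul, hβker, mul_one, hαf]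
    · intro h h' h''
      show Sh (σ h) (f h' h'' * β h' h'') * (f h (h' * h'') * β h (h' * h''))
        = (f h h' * β h h') * (f (h * h') h'' * β (h * h') h'')
      rw [map_mul]
      exact hre _ _ _ _ _ _ _ _ (hswap _ (hkerS _ _ (hβker h' h''))) (hswap _ (hβker h h'))
        (hdf h h' h'') (hβc h h' h'')
  · -- (2) transitivity
    rintro f' σ' ⟨hσ'q, hσ'1, hf'1, hαf', hdf'⟩
    have hex : ∀ h : Q, ∃ n : Nh, α n = σ' h * (σ h)⁻¹ := by
      intro h
      have h1 : (QuotientGroup.mk (σ' h * (σ h)⁻¹) : Q) = 1 := by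
        rw [QuotientGroup.mk_mul, QuotientGroup.mk_inv, hσ'q, hσ]
        group
      exact MonoidHom.mem_range.mp ((QuotientGroup.eq_one_iff _).mp h1)
    choose c0 hc0 using hex
    set c : Q → Nh := fun h => if h = 1 then 1 else c0 h with hcdef
    have hc1 : c 1 = 1 := by simp [hcdef]
    have hc : ∀ h, α (c h) = σ' h * (σ h)⁻¹ := by
      intro h
      by_cases hh : h = 1
      · subst hh; rw [hc1, map_one, hσ1, hσ'1]; group
      · simp only [hcdef]; rw [if_neg hh]; exact hc0 h
    have hσ'c : ∀ h, σ' h = α (c h) * σ h := by intro h; rw [hc]; group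
    have hShσ' : ∀ (h : Q) (m : Nh), Sh (σ' h) m = c h * Sh (σ h) m * (c h)⁻¹ := by
      intro h m; rw [hσ'c, hconj]
    set β : Q → Q → Nh :=
      fun h k => (f h k)⁻¹ * (Sh (σ h) (c k))⁻¹ * (c h)⁻¹ * f' h k * c (h * k) with hβdef
    have hβval : ∀ h k, β h k = (f h k)⁻¹ * (Sh (σ h) (c k))⁻¹ * (c h)⁻¹ * f' h k * c (h * k) :=
      fun _ _ => rfl
    have hβker : ∀ h k, α (β h k) = 1 := by
      intro h k
      rw [hβval]
      simp only [map_mul, map_inv, hαf, hαf', cm1, hc]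
      group
    have hβ1 : ∀ h, β 1 h = 1 ∧ β h 1 = 1 := by
      intro h
      constructor
      · rw [hβval, (hf1 h).1, (hf'1 h).1, hσ1, hc1, one_mul]
        simp
      · rw [hβval, (hf1 h).2, (hf'1 h).2, hc1, mul_one]
        simp
    set φ : Nh × Q → Nh × Q := fun x => (x.1 * c x.2, x.2) with hφdef
    have hφbij : Function.Bijective φ := by
      apply Function.bijective_iff_has_inverse.mpr
      refine ⟨fun x => (x.1 * (c x.2)⁻¹, x.2), fun x => ?_, fun x => ?_⟩ <;>
        simp [hφdef, mul_assoc]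
    have hφhom : ∀ x y, φ (mext f' σ' x y) = mext (fun h k => f h k * β h k) σ (φ x) (φ y) := by
      rintro ⟨n, h⟩ ⟨m, k⟩
      show (n * Sh (σ' h) m * f' h k * c (h * k), h * k)
        = ((n * c h) * Sh (σ h) (m * c k) * (f h k * β h k), h * k)
      simp only [Prod.mk.injEq]
      refine ⟨?_, trivial⟩
      rw [map_mul (Sh (σ h)), hShσ' h m, hβval]
      group
    have hassoc' : ∀ x y z, mext f' σ' (mext f' σ' x y) z = mext f' σ' x (mext f' σ' y z) := by
      rintro ⟨n, h⟩ ⟨m, k⟩ ⟨p, l⟩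
      show ((n * Sh (σ' h) m * f' h k) * Sh (σ' (h * k)) p * f' (h * k) l, h * k * l)
        = (n * Sh (σ' h) (m * Sh (σ' k) p * f' k l) * f' h (k * l), h * (k * l))
      simp only [Prod.mk.injEq]
      constructor
      · have key1 : Sh (σ' h) (Sh (σ' k) p) = f' h k * Sh (σ' (h * k)) p * (f' h k)⁻¹ := by
          have e : σ' h * σ' k = α (f' h k) * σ' (h * k) := by rw [hαf']; group
          rw [← MulAut.mul_apply, ← map_mul, e, hconj]
        have key2 := hdf' h k l
        calc (n * Sh (σ' h) m * f' h k) * Sh (σ' (h * k)) p * f' (h * k) l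
            = n * Sh (σ' h) m * (f' h k * Sh (σ' (h * k)) p * (f' h k)⁻¹)
                * (Sh (σ' h) (f' k l) * f' h (k * l)) := by rw [key2]; group
          _ = n * Sh (σ' h) m * Sh (σ' h) (Sh (σ' k) p) * Sh (σ' h) (f' k l) * f' h (k * l) := by
              rw [key1]; group
          _ = n * Sh (σ' h) (m * Sh (σ' k) p * f' k l) * f' h (k * l) := by
              rw [map_mul, map_mul]; group
      · exact mul_assoc h k l
    have hassocg : ∀ x y z, mext (fun h k => f h k * β h k) σ
          (mext (fun h k => f h k * β h k) σ x y) z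
        = mext (fun h k => f h k * β h k) σ x (mext (fun h k => f h k * β h k) σ y z) := by
      intro x y z
      obtain ⟨x', rfl⟩ := hφbij.2 x
      obtain ⟨y', rfl⟩ := hφbij.2 y
      obtain ⟨z', rfl⟩ := hφbij.2 z
      have e : φ (mext f' σ' (mext f' σ' x' y') z') = φ (mext f' σ' x' (mext f' σ' y' z')) :=
        congrArg φ (hassoc' x' y' z')
      rw [hφhom, hφhom, hφhom, hφhom] at e
      exact e
    have hβc : ∀ h h' h'', Sh (σ h) (β h' h'') * β h (h' * h'') = β h h' * β (h * h') h'' := by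
      intro h h' h''
      have e := hassocg (1, h) (1, h') (1, h'')
      have e1 : (1 * Sh (σ h) 1 * (f h h' * β h h')) * Sh (σ (h * h')) 1
            * (f (h * h') h'' * β (h * h') h'')
          = 1 * Sh (σ h) (1 * Sh (σ h') 1 * (f h' h'' * β h' h''))
            * (f h (h' * h'') * β h (h' * h'')) := congrArg Prod.fst e
      simp only [map_one, one_mul, mul_one] at e1
      have e2 : Sh (σ h) (f h' h'' * β h' h'') * (f h (h' * h'') * β h (h' * h''))
          = (f h h' * β h h') * (f (h * h') h'' * β (h * h') h'') := e1.symm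
      rw [map_mul] at e2
      exact hre2 _ _ _ _ _ _ _ _ (hswap _ (hkerS _ _ (hβker h' h''))) (hswap _ (hβker h h'))
        (hdf h h' h'') e2
    refine ⟨β, ⟨fun h k => MonoidHom.mem_ker.mpr (hβker h k), hβ1, hβc⟩,
      φ, hφbij, hφhom, ?_, ?_⟩
    · intro nn
      show (nn * c 1, (1 : Q)) = (nn, 1)
      rw [hc1, mul_one]
    · rintro ⟨n, h⟩
      show α (n * c h) * σ h = α n * σ' h
      rw [map_mul, hc]
      group
  · -- (3)
    intro β β' hβ hβ'
    obtain ⟨hβk, hβ1, hβc⟩ := hβ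
    obtain ⟨hβ'k, hβ'1, hβ'c⟩ := hβ'
    have hβker : ∀ h k, α (β h k) = 1 := fun h k => MonoidHom.mem_ker.mp (hβk h k)
    have hβ'ker : ∀ h k, α (β' h k) = 1 := fun h k => MonoidHom.mem_ker.mp (hβ'k h k)
    constructor
    · -- forward: equivalence gives coboundary
      rintro ⟨φ, hbij, hhom, hfix, hαc⟩
      have hmk1 : ∀ n : Nh, (QuotientGroup.mk (α n) : Q) = 1 :=
        fun n => (QuotientGroup.eq_one_iff _).mpr (MonoidHom.mem_range.mpr ⟨n, rfl⟩)
      have hsnd : ∀ h : Q, (φ (1, h)).2 = h := by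
        intro h
        have h3 := congrArg (QuotientGroup.mk : G → Q) (hαc (1, h))
        simp only [QuotientGroup.mk_mul, hmk1, one_mul, hσ] at h3
        exact h3
      set d : Q → Nh := fun h => (φ (1, h)).1 with hddef
      have hdker : ∀ h, α (d h) = 1 := by
        intro h
        have h4 := hαc (1, h)
        rw [hsnd h] at h4
        have h5 : α (d h) * σ h = 1 * σ h := by
          rw [one_mul]
          simpa using h4
        exact mul_right_cancel h5
      have hφ1h : ∀ h, φ (1, h) = (d h, h) := by
        intro h
        have e : φ (1, h) = ((φ (1, h)).1, (φ (1, h)).2) := rfl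
        rw [e, hsnd h]
      have hd1 : d 1 = 1 := by
        show (φ (1, 1)).1 = 1
        rw [hfix 1]
      have hφval : ∀ (n : Nh) (h : Q), φ (n, h) = (n * d h, h) := by
        intro n h
        have e1 : (n, h) = mext (fun h k => f h k * β' h k) σ (n, 1) (1, h) := by
          show (n, h) = (n * Sh (σ 1) 1 * (f 1 h * β' 1 h), 1 * h)
          rw [hσ1, (hf1 h).1, (hβ'1 h).1]
          simp
        rw [e1, hhom, hfix, hφ1h]
        show (n * Sh (σ 1) (d h) * (f 1 h * β 1 h), 1 * h) = (n * d h, h)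
        rw [hσ1, (hf1 h).1, (hβ1 h).1]
        simp
      have hE : ∀ h k, f h k * β' h k * d (h * k)
          = d h * Sh (σ h) (d k) * (f h k * β h k) := by
        intro h k
        have e := hhom (1, h) (1, k)
        rw [hφ1h, hφ1h] at e
        have e2 : φ (1 * Sh (σ h) 1 * (f h k * β' h k), h * k)
            = (d h * Sh (σ h) (d k) * (f h k * β h k), h * k) := e
        rw [show (1 * Sh (σ h) 1 * (f h k * β' h k) : Nh) = f h k * β' h k by simp] at e2
        rw [hφval] at e2
        exact congrArg Prod.fst e2
      refine ⟨d, fun h => MonoidHom.mem_ker.mpr (hdker h), hd1, ?_⟩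
      intro h k
      show (β h k)⁻¹ * β' h k = Sh (σ h) (d k) * (d (h * k))⁻¹ * d h
      have hD1 := hswap (d h) (hdker h)
      have hD2 := hswap (Sh (σ h) (d k)) (hkerS _ _ (hdker k))
      have hD3i := hswap (d (h * k))⁻¹ (by rw [map_inv, hdker, inv_one])
      have hB := hswap (β h k) (hβker h k)
      have E3 : β' h k = (f h k)⁻¹ * (d h * Sh (σ h) (d k) * (f h k * β h k)) * (d (h * k))⁻¹ := by
        rw [← hE h k]; group
      have hB' : β' h k = β h k * (Sh (σ h) (d k) * (d (h * k))⁻¹ * d h) := by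
        calc β' h k
            = (f h k)⁻¹ * (d h * Sh (σ h) (d k) * (f h k * β h k)) * (d (h * k))⁻¹ := E3
          _ = (f h k)⁻¹ * (d h * (Sh (σ h) (d k) * f h k) * β h k) * (d (h * k))⁻¹ := by group
          _ = (f h k)⁻¹ * (d h * (f h k * Sh (σ h) (d k)) * β h k) * (d (h * k))⁻¹ := by
              rw [hD2 (f h k)]
          _ = (f h k)⁻¹ * ((d h * f h k) * (Sh (σ h) (d k) * β h k)) * (d (h * k))⁻¹ := by group
          _ = (f h k)⁻¹ * ((f h k * d h) * (Sh (σ h) (d k) * β h k)) * (d (h * k))⁻¹ := by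
              rw [hD1 (f h k)]
          _ = d h * (Sh (σ h) (d k) * (β h k * (d (h * k))⁻¹)) := by group
          _ = d h * (Sh (σ h) (d k) * ((d (h * k))⁻¹ * β h k)) := by rw [hB (d (h * k))⁻¹]
          _ = (d h * (Sh (σ h) (d k) * (d (h * k))⁻¹)) * β h k := by group
          _ = β h k * (d h * (Sh (σ h) (d k) * (d (h * k))⁻¹)) :=
              (hB (d h * (Sh (σ h) (d k) * (d (h * k))⁻¹))).symm
          _ = β h k * (d h * ((d (h * k))⁻¹ * Sh (σ h) (d k))) := by rw [hD2 (d (h * k))⁻¹]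
          _ = β h k * ((d h * (d (h * k))⁻¹) * Sh (σ h) (d k)) := by group
          _ = β h k * (((d (h * k))⁻¹ * d h) * Sh (σ h) (d k)) := by rw [hD1 (d (h * k))⁻¹]
          _ = β h k * ((d (h * k))⁻¹ * (d h * Sh (σ h) (d k))) := by group
          _ = β h k * ((d (h * k))⁻¹ * (Sh (σ h) (d k) * d h)) := by rw [hD1 (Sh (σ h) (d k))]
          _ = β h k * (((d (h * k))⁻¹ * Sh (σ h) (d k)) * d h) := by group
          _ = β h k * ((Sh (σ h) (d k) * (d (h * k))⁻¹) * d h) := by rw [hD3i (Sh (σ h) (d k))]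
          _ = β h k * (Sh (σ h) (d k) * (d (h * k))⁻¹ * d h) := by group
      rw [hB']
      group
    · -- backward: coboundary gives equivalence
      rintro ⟨c, hck, hc1, hcrel⟩
      have hcker : ∀ h, α (c h) = 1 := fun h => MonoidHom.mem_ker.mp (hck h)
      have hβ'val : ∀ h k, β' h k = β h k * (Sh (σ h) (c k) * (c (h * k))⁻¹ * c h) := by
        intro h k
        have e := hcrel h k
        rw [← e]; group
      refine ⟨fun x => (x.1 * c x.2, x.2), ?_, ?_, ?_, ?_⟩
      · apply Function.bijective_iff_has_inverse.mpr
        refine ⟨fun x => (x.1 * (c x.2)⁻¹, x.2), fun x => ?_, fun x => ?_⟩ <;>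
          simp [mul_assoc]
      · rintro ⟨n, h⟩ ⟨m, k⟩
        show (n * Sh (σ h) m * (f h k * β' h k) * c (h * k), h * k)
          = ((n * c h) * Sh (σ h) (m * c k) * (f h k * β h k), h * k)
        simp only [Prod.mk.injEq]
        refine ⟨?_, trivial⟩
        have hQ := hswap (Sh (σ h) (c k)) (hkerS _ _ (hcker k))
        have hch := hswap (c h) (hcker h)
        have hB := hswap (β h k) (hβker h k)
        rw [map_mul (Sh (σ h)), hβ'val]
        calc n * Sh (σ h) m * (f h k * (β h k * (Sh (σ h) (c k) * (c (h * k))⁻¹ * c h)))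
              * c (h * k)
            = n * Sh (σ h) m * f h k * β h k * Sh (σ h) (c k)
                * ((c (h * k))⁻¹ * (c h * c (h * k))) := by group
          _ = n * Sh (σ h) m * f h k * β h k * Sh (σ h) (c k)
                * ((c (h * k))⁻¹ * (c (h * k) * c h)) := by rw [hch (c (h * k))]
          _ = n * Sh (σ h) m * (f h k * (β h k * Sh (σ h) (c k))) * c h := by group
          _ = n * Sh (σ h) m * (f h k * (Sh (σ h) (c k) * β h k)) * c h := by
              rw [hB (Sh (σ h) (c k))]
          _ = n * Sh (σ h) m * ((f h k * Sh (σ h) (c k)) * β h k) * c h := by group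
          _ = n * Sh (σ h) m * ((Sh (σ h) (c k) * f h k) * β h k) * c h := by
              rw [← hQ (f h k)]
          _ = n * ((Sh (σ h) m * (Sh (σ h) (c k) * (f h k * β h k))) * c h) := by group
          _ = n * (c h * (Sh (σ h) m * (Sh (σ h) (c k) * (f h k * β h k)))) := by
              rw [← hch (Sh (σ h) m * (Sh (σ h) (c k) * (f h k * β h k)))]
          _ = (n * c h) * (Sh (σ h) m * Sh (σ h) (c k)) * (f h k * β h k) := by group
      · intro nn
        show (nn * c 1, (1 : Q)) = (nn, 1)
        rw [hc1, mul_one]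
      · rintro ⟨n, h⟩
        show α (n * c h) * σ h = α n * σ h
        rw [map_mul, hcker, mul_one]
end
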